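/- arXiv:0708.2282 — 11 statements merged into one kernel-verified Lean document; each statement's English description precedes it below -/
import Mathlib

section
/- Let n ≥ 1 and let B be a set of points of PG(n,2). Let d = d(B) be the projective dimension of the subspace of PG(n,2) spanned by B. Then B is a minimal blocking set in PG(n,2) if and only if d is odd, B consists of exactly d+2 points, and no d+1 points of B lie in a common hyperplane of the spanned subspace (equivalently, every subset of B of size d+1 has the same linear span as B). -/
/-- A blocking set in `PG(n,q)` (points: 1-dimensional subspaces of `K^(n+1)`,
hyperplanes: `n`-dimensional subspaces): a set of points meeting every hyperplane. -/
def IsBlockingSet {K : Type*} [Field K] {n : ℕ}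
    (B : Set (Projectivization K (Fin (n + 1) → K))) : Prop :=
  ∀ W : Submodule K (Fin (n + 1) → K), Module.finrank K W = n →
    ∃ x ∈ B, x.rep ∈ W

/-- A minimal blocking set: a blocking set no proper subset of which is a blocking set. -/
def IsMinimalBlockingSet {K : Type*} [Field K] {n : ℕ}
    (B : Set (Projectivization K (Fin (n + 1) → K))) : Prop :=
  IsBlockingSet B ∧ ∀ B' ⊂ B, ¬ IsBlockingSet B'

/-- The linear span of (representative vectors of) a set of projective points;
the projective dimension `d(B)` is `finrank` of this span minus one. -/
noncomputable def projSpan {K : Type*} [Field K] {n : ℕ}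
    (B : Set (Projectivization K (Fin (n + 1) → K))) : Submodule K (Fin (n + 1) → K) :=
  Submodule.span K (Projectivization.rep '' B)


open Submodule Module Finset

namespace PGAux

variable {n : ℕ}

instance : Finite (Projectivization (ZMod 2) (Fin (n + 1) → ZMod 2)) :=
  Quotient.finite _

lemma zmod2_cases (x : ZMod 2) : x = 0 ∨ x = 1 := by revert x; decide

lemma rep_inj :
    Function.Injective
      (Projectivization.rep : Projectivization (ZMod 2) (Fin (n + 1) → ZMod 2) → _) := by
  intro x y h
  rw [← Projectivization.mk_rep x, ← Projectivization.mk_rep y]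
  congr 1

lemma add_self (x : Fin (n + 1) → ZMod 2) : x + x = 0 := by
  funext i; exact CharTwo.add_self_eq_zero _

/-- Over `F₂`, membership in the span of a finset is a subset sum. -/
lemma mem_span_iff_sum {s : Finset (Fin (n + 1) → ZMod 2)} {x : Fin (n + 1) → ZMod 2} :
    x ∈ span (ZMod 2) (s : Set (Fin (n + 1) → ZMod 2)) ↔ ∃ t ⊆ s, ∑ v ∈ t, v = x := by
  classical
  rw [mem_span_finset]
  constructor
  · rintro ⟨f, -, hf⟩
    refine ⟨s.filter (fun v => f v = 1), filter_subset _ _, ?_⟩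
    rw [← hf, Finset.sum_filter]
    refine Finset.sum_congr rfl fun v _ => ?_
    rcases zmod2_cases (f v) with h | h <;> simp [h]
  · rintro ⟨t, hts, ht⟩
    refine ⟨fun v => if v ∈ t then 1 else 0, fun v hv => hts (by by_contra h; simp [h] at hv), ?_⟩
    rw [← ht]
    simp only [ite_smul, one_smul, zero_smul]
    rw [Finset.sum_ite_mem, Finset.inter_eq_right.mpr hts]

lemma li_of_no_zero_sum {s : Finset (Fin (n + 1) → ZMod 2)}
    (h : ∀ t ⊆ s, t.Nonempty → ∑ v ∈ t, v ≠ 0) :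
    LinearIndependent (ZMod 2)
      (fun x : (s : Set (Fin (n + 1) → ZMod 2)) => (x : Fin (n + 1) → ZMod 2)) := by
  classical
  change LinearIndepOn (ZMod 2) id (s : Set (Fin (n + 1) → ZMod 2))
  rw [linearIndepOn_iff]
  intro l hl hl0
  by_contra hne
  have hsupp : l.support.Nonempty := Finsupp.support_nonempty_iff.mpr hne
  have hsub : l.support ⊆ s := by
    intro v hv
    exact_mod_cast (Finsupp.mem_supported _ l).mp hl hv
  refine h l.support hsub hsupp ?_
  have h1 : ∀ v ∈ l.support, (v : Fin (n + 1) → ZMod 2) = l v • v := by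
    intro v hv
    rcases zmod2_cases (l v) with h0 | h1
    · exact absurd h0 (Finsupp.mem_support_iff.mp hv)
    · rw [h1, one_smul]
  rw [Finset.sum_congr rfl h1, ← hl0, Finsupp.linearCombination_apply, Finsupp.sum]
  simp

lemma finrank_span_of_no_zero_sum {s : Finset (Fin (n + 1) → ZMod 2)}
    (h : ∀ t ⊆ s, t.Nonempty → ∑ v ∈ t, v ≠ 0) :
    finrank (ZMod 2) (span (ZMod 2) (s : Set (Fin (n + 1) → ZMod 2))) = s.card := by
  have := finrank_span_set_eq_card (s := (s : Set (Fin (n + 1) → ZMod 2)))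
    (li_of_no_zero_sum h)
  rwa [Finset.toFinset_coe] at this

lemma no_zero_sum_of_finrank {s : Finset (Fin (n + 1) → ZMod 2)}
    (h : finrank (ZMod 2) (span (ZMod 2) (s : Set (Fin (n + 1) → ZMod 2))) = s.card) :
    ∀ t ⊆ s, t.Nonempty → ∑ v ∈ t, v ≠ 0 := by
  classical
  rintro t hts ⟨a, hat⟩ hsum
  have has : a ∈ s := hts hat
  have ha : a = ∑ v ∈ t.erase a, v := by
    have h2 := Finset.sum_erase_add t id hat
    simp only [id] at h2
    rw [hsum] at h2
    have := congrArg (· + a) h2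
    simpa [add_assoc, add_self] using this.symm
  have hsub : (s : Set (Fin (n + 1) → ZMod 2)) ⊆
      span (ZMod 2) ((s.erase a : Finset (Fin (n + 1) → ZMod 2)) : Set (Fin (n + 1) → ZMod 2)) := by
    intro v hv
    simp only [Finset.mem_coe] at hv
    by_cases hva : v = a
    · have hmem : (∑ w ∈ t.erase a, w) ∈
          span (ZMod 2) ((s.erase a : Finset (Fin (n + 1) → ZMod 2)) :
            Set (Fin (n + 1) → ZMod 2)) :=
        sum_mem (fun c hc => subset_span (Finset.mem_coe.mpr (Finset.mem_erase.mpr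
          ⟨(Finset.mem_erase.mp hc).1, hts (Finset.mem_of_mem_erase hc)⟩)))
      rw [hva]
      rwa [← ha] at hmem
    · exact subset_span (Finset.mem_coe.mpr (Finset.mem_erase.mpr ⟨hva, hv⟩))
  have hle : span (ZMod 2) (s : Set (Fin (n + 1) → ZMod 2)) ≤
      span (ZMod 2) ((s.erase a : Finset (Fin (n + 1) → ZMod 2)) :
        Set (Fin (n + 1) → ZMod 2)) := span_le.mpr hsub
  have h1 : s.card ≤ (s.erase a).card := by
    rw [← h]
    calc finrank (ZMod 2) (span (ZMod 2) (s : Set (Fin (n + 1) → ZMod 2)))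
        ≤ finrank (ZMod 2) (span (ZMod 2) ((s.erase a : Finset (Fin (n + 1) → ZMod 2)) :
            Set (Fin (n + 1) → ZMod 2))) := Submodule.finrank_mono hle
      _ ≤ (s.erase a).card := finrank_span_finset_le_card _
  have h2 : (s.erase a).card < s.card := Finset.card_erase_lt_of_mem has
  omega

lemma finrank_ker_eq {f : (Fin (n + 1) → ZMod 2) →ₗ[ZMod 2] ZMod 2} (hf : f ≠ 0) :
    finrank (ZMod 2) (LinearMap.ker f) = n := by
  obtain ⟨x, hx⟩ : ∃ x, f x ≠ 0 := by
    by_contra hc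
    push_neg at hc
    exact hf (LinearMap.ext fun v => by simp [hc v])
  have hrange : LinearMap.range f = ⊤ := by
    refine top_unique fun c _ => ⟨(c * (f x)⁻¹) • x, ?_⟩
    rw [map_smul, smul_eq_mul, mul_assoc, inv_mul_cancel₀ hx, mul_one]
  have h1 : finrank (ZMod 2) (LinearMap.range f) = 1 := by
    rw [hrange, finrank_top, finrank_self]
  have h2 := LinearMap.finrank_range_add_finrank_ker f
  rw [h1] at h2
  have h3 : finrank (ZMod 2) (Fin (n + 1) → ZMod 2) = n + 1 := by simp
  omega

lemma exists_ker_eq {W : Submodule (ZMod 2) (Fin (n + 1) → ZMod 2)}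
    (hW : finrank (ZMod 2) W = n) :
    ∃ f : (Fin (n + 1) → ZMod 2) →ₗ[ZMod 2] ZMod 2, f ≠ 0 ∧ LinearMap.ker f = W := by
  have hV : finrank (ZMod 2) (Fin (n + 1) → ZMod 2) = n + 1 := by simp
  have hq : finrank (ZMod 2) ((Fin (n + 1) → ZMod 2) ⧸ W) = 1 := by
    have := W.finrank_quotient_add_finrank
    rw [hW, hV] at this
    omega
  let e : ((Fin (n + 1) → ZMod 2) ⧸ W) ≃ₗ[ZMod 2] ZMod 2 :=
    LinearEquiv.ofFinrankEq _ _ (by rw [hq, finrank_self])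
  have hker : LinearMap.ker (e.toLinearMap ∘ₗ W.mkQ) = W := by
    ext x
    simp [LinearMap.mem_ker, LinearEquiv.map_eq_zero_iff, Submodule.Quotient.mk_eq_zero]
  refine ⟨e.toLinearMap ∘ₗ W.mkQ, fun h0 => ?_, hker⟩
  have : W = ⊤ := by rw [← hker, h0, LinearMap.ker_zero]
  rw [this, finrank_top, hV] at hW
  omega

/-- If no odd subset of `T` sums to zero, there is a nonzero functional
that is nonzero on all of `T`. -/
lemma exists_functional_miss (T : Finset (Fin (n + 1) → ZMod 2))
    (hno : ∀ t ⊆ T, Odd t.card → ∑ v ∈ t, v ≠ 0) :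
    ∃ f : (Fin (n + 1) → ZMod 2) →ₗ[ZMod 2] ZMod 2, f ≠ 0 ∧ ∀ a ∈ T, f a ≠ 0 := by
  classical
  rcases T.eq_empty_or_nonempty with rfl | ⟨a0, ha0⟩
  · refine ⟨LinearMap.proj 0, fun h => ?_, by simp⟩
    have := congrFun (congrArg DFunLike.coe h) (fun _ => 1)
    simpa using this
  · set D : Submodule (ZMod 2) (Fin (n + 1) → ZMod 2) :=
      span (ZMod 2) ((T.image (· + a0) : Finset _) : Set _) with hD
    have ha0D : a0 ∉ D := by
      intro hmem
      rw [hD, mem_span_iff_sum] at hmem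
      obtain ⟨t, hts, ht⟩ := hmem
      obtain ⟨u, hus, hu⟩ := Finset.subset_image_iff.mp hts
      have hinj : Set.InjOn (· + a0) u := fun x _ y _ h => by
        simpa using congrArg (· + a0) h
      rw [← hu, Finset.sum_image hinj] at ht
      have hsum : ∑ a ∈ u, (a + a0) = ∑ a ∈ u, a + u.card • a0 := by
        rw [Finset.sum_add_distrib, Finset.sum_const]
      rw [hsum] at ht
      rcases Nat.even_or_odd u.card with he | ho
      · have h0 : u.card • a0 = 0 := by
          obtain ⟨k, hk⟩ := he
          rw [hk, add_nsmul]
          exact add_self _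
        rw [h0, add_zero] at ht
        by_cases ha0u : a0 ∈ u
        · refine hno (u.erase a0) ((Finset.erase_subset _ _).trans hus) ?_ ?_
          · rw [Finset.card_erase_of_mem ha0u]
            obtain ⟨k, hk⟩ := he
            have : 1 ≤ u.card := Finset.card_pos.mpr ⟨a0, ha0u⟩
            exact ⟨(u.card - 2) / 2, by omega⟩
          · have h2 := Finset.sum_erase_add u id ha0u
            simp only [id] at h2
            rw [ht] at h2
            have := congrArg (· + a0) h2
            simpa [add_assoc, add_self] using this
        · refine hno (insert a0 u) (Finset.insert_subset ha0 hus) ?_ ?_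
          · rw [Finset.card_insert_of_notMem ha0u]
            obtain ⟨k, hk⟩ := he
            exact ⟨k, by omega⟩
          · rw [Finset.sum_insert ha0u, ht, add_self]
      · have h1 : u.card • a0 = a0 := by
          obtain ⟨k, hk⟩ := ho
          rw [hk, show 2 * k + 1 = (k + k) + 1 by ring, add_nsmul, add_nsmul, one_nsmul,
            add_self, zero_add]
        rw [h1] at ht
        have h2 := congrArg (· + a0) ht
        simp only [add_assoc, add_self, add_zero] at h2
        exact hno u hus ho h2
    obtain ⟨g, hg⟩ : ∃ g : Module.Dual (ZMod 2) ((Fin (n + 1) → ZMod 2) ⧸ D),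
        g (D.mkQ a0) ≠ 0 := by
      by_contra hc
      push_neg at hc
      have := (Module.forall_dual_apply_eq_zero_iff (ZMod 2) (D.mkQ a0)).mp hc
      rw [Submodule.mkQ_apply, Submodule.Quotient.mk_eq_zero] at this
      exact ha0D this
    refine ⟨g ∘ₗ D.mkQ, fun h0 => ?_, fun a haT => ?_⟩
    · have := congrFun (congrArg DFunLike.coe h0) a0
      exact hg (by simpa using this)
    · have hmemD : a + a0 ∈ D := subset_span (by
        simp only [Finset.coe_image, Set.mem_image, Finset.mem_coe]
        exact ⟨a, haT, rfl⟩)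
      have hz : g (D.mkQ (a + a0)) = 0 := by
        rw [Submodule.mkQ_apply, (Submodule.Quotient.mk_eq_zero D).mpr hmemD, map_zero]
      rw [map_add, map_add] at hz
      intro hfa
      simp only [LinearMap.comp_apply] at hfa
      rw [hfa, zero_add] at hz
      exact hg hz


lemma blocking_iff (B : Set (Projectivization (ZMod 2) (Fin (n + 1) → ZMod 2))) :
    IsBlockingSet B ↔
      ∃ s : Finset (Fin (n + 1) → ZMod 2),
        ↑s ⊆ Projectivization.rep '' B ∧ Odd s.card ∧ ∑ v ∈ s, v = 0 := by
  classical
  constructor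
  · intro hb
    by_contra hno
    push_neg at hno
    have hfin : (Projectivization.rep '' B).Finite := Set.toFinite _
    set T := hfin.toFinset with hT
    have hTA : ↑T = Projectivization.rep '' B := hfin.coe_toFinset
    have hno' : ∀ t ⊆ T, Odd t.card → ∑ v ∈ t, v ≠ 0 := by
      intro t ht hodd
      exact hno t ((Finset.coe_subset.mpr ht).trans hTA.subset) hodd
    obtain ⟨f, hf0, hfT⟩ := exists_functional_miss T hno'
    obtain ⟨x, hxB, hxW⟩ := hb (LinearMap.ker f) (finrank_ker_eq hf0)
    have hmem : Projectivization.rep x ∈ T := by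
      rw [← Finset.mem_coe, hTA]
      exact ⟨x, hxB, rfl⟩
    exact hfT _ hmem (LinearMap.mem_ker.mp hxW)
  · rintro ⟨s, hsB, hodd, hsum⟩ W hW
    obtain ⟨f, hf0, hker⟩ := exists_ker_eq hW
    by_contra hnone
    push_neg at hnone
    have h1 : ∀ v ∈ s, f v = 1 := by
      intro v hv
      obtain ⟨x, hxB, rfl⟩ := hsB hv
      have hne : f x.rep ≠ 0 := fun h => hnone x hxB (hker ▸ LinearMap.mem_ker.mpr h)
      rcases zmod2_cases (f x.rep) with h | h
      · exact absurd h hne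
      · exact h
    have hcard : ((s.card : ℕ) : ZMod 2) = 1 := by
      obtain ⟨k, hk⟩ := hodd
      rw [hk]
      push_cast
      rw [show ((2 : ZMod 2)) = 0 by decide]
      ring
    have h2 : (1 : ZMod 2) = 0 := by
      calc (1 : ZMod 2) = ((s.card : ℕ) : ZMod 2) := hcard.symm
        _ = ∑ v ∈ s, f v := by
            rw [Finset.sum_congr rfl h1, Finset.sum_const, nsmul_eq_mul, mul_one]
        _ = f (∑ v ∈ s, v) := (map_sum f _ s).symm
        _ = 0 := by rw [hsum, map_zero]
    exact one_ne_zero h2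

end PGAux

open PGAux in
theorem statement_0 (n : ℕ) (hn : 1 ≤ n)
    (B : Set (Projectivization (ZMod 2) (Fin (n + 1) → ZMod 2)))
    (d : ℕ) (hd : d = Module.finrank (ZMod 2) (projSpan B) - 1) :
    IsMinimalBlockingSet B ↔
      Odd d ∧ B.ncard = d + 2 ∧
        ∀ S ⊆ B, S.ncard = d + 1 → projSpan S = projSpan B := by
  classical
  have hfin : (Projectivization.rep '' B).Finite := Set.toFinite _
  set T : Finset (Fin (n + 1) → ZMod 2) := hfin.toFinset with hTdef
  have hTA : (T : Set (Fin (n + 1) → ZMod 2)) = Projectivization.rep '' B := hfin.coe_toFinset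
  have himg : ∀ s : Finset (Fin (n + 1) → ZMod 2), (s : Set (Fin (n + 1) → ZMod 2)) ⊆
      Projectivization.rep '' B →
      Projectivization.rep '' (B ∩ Projectivization.rep ⁻¹' ↑s) = ↑s := by
    intro s hs
    rw [Set.image_inter_preimage]
    exact Set.inter_eq_right.mpr hs
  have hspanT : projSpan B = span (ZMod 2) (T : Set (Fin (n + 1) → ZMod 2)) := by
    rw [projSpan, ← hTA]
  have hcardT : B.ncard = T.card := by
    rw [← Set.ncard_image_of_injective B rep_inj, ← hTA, Set.ncard_coe_finset]
  have hT0 : (0 : Fin (n + 1) → ZMod 2) ∉ T := by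
    intro h0
    have : (0 : Fin (n + 1) → ZMod 2) ∈ Projectivization.rep '' B := by
      rw [← hTA]; exact Finset.mem_coe.mpr h0
    obtain ⟨x, -, hx⟩ := this
    exact x.rep_nonzero hx
  have hmin : IsMinimalBlockingSet B ↔
      ((Odd T.card ∧ ∑ v ∈ T, v = 0) ∧
        ∀ s ⊆ T, Odd s.card → ∑ v ∈ s, v = 0 → s = T) := by
    constructor
    · rintro ⟨hb, hm⟩
      have huniq : ∀ s ⊆ T, Odd s.card → ∑ v ∈ s, v = 0 → s = T := by
        intro s hsT hodd hsum
        by_contra hne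
        have hsB : (s : Set (Fin (n + 1) → ZMod 2)) ⊆ Projectivization.rep '' B := by
          rw [← hTA]; exact Finset.coe_subset.mpr hsT
        have hBs : B ∩ Projectivization.rep ⁻¹' ↑s ⊂ B := by
          refine ⟨Set.inter_subset_left, fun hBsub => ?_⟩
          have himgsub : Projectivization.rep '' B ⊆ ↑s := by
            rintro v ⟨x, hxB, rfl⟩
            exact (hBsub hxB).2
          have : T ⊆ s := Finset.coe_subset.mp (hTA ▸ himgsub)
          exact hne (Finset.Subset.antisymm hsT this)
        refine hm _ hBs ((blocking_iff _).mpr ⟨s, ?_, hodd, hsum⟩)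
        rw [himg s hsB]
      obtain ⟨s, hsB, hodd, hsum⟩ := (blocking_iff B).mp hb
      have hsT : s ⊆ T := Finset.coe_subset.mp (by rw [hTA]; exact hsB)
      have hs_eq := huniq s hsT hodd hsum
      rw [hs_eq] at hodd hsum
      exact ⟨⟨hodd, hsum⟩, huniq⟩
    · rintro ⟨⟨hoddT, hsumT⟩, huniq⟩
      refine ⟨(blocking_iff B).mpr ⟨T, hTA.subset, hoddT, hsumT⟩, ?_⟩
      rintro B' hB' hbB'
      obtain ⟨s, hsB', hodd, hsum⟩ := (blocking_iff B').mp hbB'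
      have hsT : s ⊆ T := Finset.coe_subset.mp
        (by rw [hTA]; exact hsB'.trans (Set.image_mono hB'.subset))
      have hs_eq := huniq s hsT hodd hsum
      have hcontra : B ⊆ B' := by
        intro x hx
        have hmem : Projectivization.rep x ∈ Projectivization.rep '' B' := by
          apply hsB'
          rw [hs_eq, Finset.mem_coe, ← Finset.mem_coe, hTA]
          exact ⟨x, hx, rfl⟩
        obtain ⟨y, hy, hxy⟩ := hmem
        rwa [← rep_inj hxy]
      exact hB'.ne (Set.Subset.antisymm hB'.subset hcontra)
  rw [hmin]
  constructor
  · rintro ⟨⟨hoddT, hsumT⟩, huniq⟩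
    have hproper : ∀ t ⊆ T, t ≠ T → t.Nonempty → ∑ v ∈ t, v ≠ 0 := by
      intro t htT htne htne0 hsum0
      rcases Nat.even_or_odd t.card with he | ho
      · have hposs : 1 ≤ t.card := Finset.card_pos.mpr htne0
        have hle : t.card ≤ T.card := Finset.card_le_card htT
        have hcardsd : (T \ t).card = T.card - t.card := Finset.card_sdiff_of_subset htT
        have hodd' : Odd (T \ t).card := by
          obtain ⟨a, ha⟩ := hoddT
          obtain ⟨b, hb⟩ := he
          exact ⟨a - b, by omega⟩
        have hsum' : ∑ v ∈ T \ t, v = 0 := by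
          have h3 := Finset.sum_sdiff (f := id) htT
          simp only [id] at h3
          rw [hsum0, add_zero] at h3
          rw [h3, hsumT]
        have h4 := huniq _ Finset.sdiff_subset hodd' hsum'
        have h5 := congrArg Finset.card h4
        rw [hcardsd] at h5
        omega
      · exact htne (huniq t htT ho hsum0)
    have hTne : T.Nonempty := Finset.card_pos.mp (by obtain ⟨a, ha⟩ := hoddT; omega)
    have hcard3 : 3 ≤ T.card := by
      by_contra hlt
      have h1 : T.card = 1 := by obtain ⟨a, ha⟩ := hoddT; omega
      obtain ⟨a, ha⟩ := Finset.card_eq_one.mp h1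
      rw [ha, Finset.sum_singleton] at hsumT
      rw [ha, hsumT] at hT0
      exact hT0 (Finset.mem_singleton_self 0)
    have herase : ∀ a ∈ T, span (ZMod 2) ((T.erase a : Finset (Fin (n + 1) → ZMod 2)) :
        Set (Fin (n + 1) → ZMod 2)) = span (ZMod 2) (T : Set (Fin (n + 1) → ZMod 2)) := by
      intro a haT
      refine le_antisymm (span_mono (Finset.coe_subset.mpr (Finset.erase_subset a T))) ?_
      rw [span_le]
      intro v hv
      simp only [Finset.mem_coe] at hv
      by_cases hva : v = a
      · have ha' : a = ∑ w ∈ T.erase a, w := by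
          have h2 := Finset.sum_erase_add T id haT
          simp only [id] at h2
          rw [hsumT] at h2
          have h3 := congrArg (· + a) h2
          have h4 : ∑ w ∈ T.erase a, w = a := by simpa [add_assoc, add_self] using h3
          exact h4.symm
        have hmem : (∑ w ∈ T.erase a, w) ∈ span (ZMod 2)
            ((T.erase a : Finset (Fin (n + 1) → ZMod 2)) : Set (Fin (n + 1) → ZMod 2)) :=
          sum_mem fun c hc => subset_span (Finset.mem_coe.mpr hc)
        rw [hva]
        rwa [← ha'] at hmem
      · exact subset_span (Finset.mem_coe.mpr (Finset.mem_erase.mpr ⟨hva, hv⟩))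
    have hkval : finrank (ZMod 2)
        (span (ZMod 2) (T : Set (Fin (n + 1) → ZMod 2))) = T.card - 1 := by
      obtain ⟨a, haT⟩ := hTne
      rw [← herase a haT, finrank_span_of_no_zero_sum, Finset.card_erase_of_mem haT]
      intro t ht htne
      refine hproper t (ht.trans (Finset.erase_subset a T)) (fun htT => ?_) htne
      have : a ∈ t := htT ▸ haT
      exact (Finset.mem_erase.mp (ht this)).1 rfl
    have hdT : d = T.card - 2 := by
      rw [hd, hspanT, hkval]
      omega
    have hoddd : Odd d := by
      obtain ⟨a, ha⟩ := hoddT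
      exact ⟨a - 1, by omega⟩
    refine ⟨hoddd, by omega, ?_⟩
    intro S hS hScard
    have hrepS : Projectivization.rep '' S ⊆
        (T : Set (Fin (n + 1) → ZMod 2)) := by
      rw [hTA]; exact Set.image_mono hS
    set s : Finset (Fin (n + 1) → ZMod 2) :=
      (Set.toFinite (Projectivization.rep '' S)).toFinset with hsdef
    have hsS : (s : Set (Fin (n + 1) → ZMod 2)) = Projectivization.rep '' S :=
      Set.Finite.coe_toFinset _
    have hsT : s ⊆ T := Finset.coe_subset.mp (by rw [hsS]; exact hrepS)
    have hscard : s.card = d + 1 := by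
      rw [← Set.ncard_coe_finset, hsS, Set.ncard_image_of_injective _ rep_inj, hScard]
    obtain ⟨a, haT, has⟩ : ∃ a ∈ T, a ∉ s := by
      by_contra hc
      push_neg at hc
      have := Finset.card_le_card hc
      omega
    have hse : s = T.erase a := by
      refine Finset.eq_of_subset_of_card_le
        (fun x hx => Finset.mem_erase.mpr ⟨fun h => has (h ▸ hx), hsT hx⟩) ?_
      rw [Finset.card_erase_of_mem haT]
      omega
    have hspaneq : span (ZMod 2) (s : Set (Fin (n + 1) → ZMod 2)) =
        span (ZMod 2) (T : Set (Fin (n + 1) → ZMod 2)) := by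
      rw [hse]; exact herase a haT
    rw [projSpan, projSpan, ← hsS, ← hTA, hspaneq]
  · rintro ⟨hoddd, hncard, hspans⟩
    have hTcard : T.card = d + 2 := by rw [← hcardT]; exact hncard
    have hk1 : finrank (ZMod 2) (span (ZMod 2) (T : Set (Fin (n + 1) → ZMod 2))) ≠ 0 := by
      intro h0
      rw [hd, hspanT, h0] at hoddd
      simp [Nat.odd_iff] at hoddd
    have hk : finrank (ZMod 2) (span (ZMod 2) (T : Set (Fin (n + 1) → ZMod 2))) = d + 1 := by
      rw [hd, hspanT]
      omega
    have herasefree : ∀ a ∈ T, ∀ t ⊆ T.erase a, t.Nonempty → ∑ v ∈ t, v ≠ 0 := by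
      intro a haT
      apply no_zero_sum_of_finrank
      have hsub : ((T.erase a : Finset (Fin (n + 1) → ZMod 2)) :
          Set (Fin (n + 1) → ZMod 2)) ⊆ Projectivization.rep '' B := by
        rw [← hTA]; exact Finset.coe_subset.mpr (Finset.erase_subset a T)
      have himgS := himg _ hsub
      have hScard : (B ∩ Projectivization.rep ⁻¹' ↑(T.erase a)).ncard = d + 1 := by
        rw [← Set.ncard_image_of_injective _ rep_inj, himgS, Set.ncard_coe_finset,
          Finset.card_erase_of_mem haT, hTcard]
        omega
      have hspanS := hspans _ Set.inter_subset_left hScard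
      rw [projSpan, projSpan, himgS, ← hTA] at hspanS
      rw [hspanS, hk, Finset.card_erase_of_mem haT, hTcard]
      omega
    have hsumT : ∑ v ∈ T, v = 0 := by
      have hnotfree : ¬ ∀ t ⊆ T, t.Nonempty → ∑ v ∈ t, v ≠ 0 := by
        intro hfree
        have hcontra := finrank_span_of_no_zero_sum hfree
        rw [hk, hTcard] at hcontra
        omega
      push_neg at hnotfree
      obtain ⟨t, htT, htne, htsum⟩ := hnotfree
      have ht_eq : t = T := by
        by_contra hne
        obtain ⟨a, haT, hat⟩ :=
          Finset.exists_of_ssubset (Finset.ssubset_iff_subset_ne.mpr ⟨htT, hne⟩)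
        exact herasefree a haT t
          (fun x hx => Finset.mem_erase.mpr ⟨fun h => hat (h ▸ hx), htT hx⟩) htne htsum
      rwa [ht_eq] at htsum
    have hoddT : Odd T.card := by
      obtain ⟨a, ha⟩ := hoddd
      rw [hTcard]
      exact ⟨a + 1, by omega⟩
    refine ⟨⟨hoddT, hsumT⟩, ?_⟩
    intro s hsT hsodd hssum
    by_contra hne
    obtain ⟨a, haT, has⟩ :=
      Finset.exists_of_ssubset (Finset.ssubset_iff_subset_ne.mpr ⟨hsT, hne⟩)
    have hsne : s.Nonempty := Finset.card_pos.mp (by obtain ⟨c, hc⟩ := hsodd; omega)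
    exact herasefree a haT s
      (fun x hx => Finset.mem_erase.mpr ⟨fun h => has (h ▸ hx), hsT hx⟩) hsne hssum
end

section
/- Let G be a finite 2-group and let n be a positive integer. Then G admits a 𝔠_{n+1}-cover if and only if n is even and G is isomorphic to (C_2)^n. -/
/-- `IsCCover n 𝒞` : `𝒞` is a `𝔠ₙ`-cover of `G`, i.e. a set of `n` proper subgroups
whose union is `G` (a cover), which is irredundant (no proper subset covers `G`),
maximal (all members are maximal subgroups) and core-free (the normal core of the
intersection of the members is trivial). -/
def IsCCover {G : Type*} [Group G] (n : ℕ) (𝒞 : Finset (Subgroup G)) : Prop :=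
  𝒞.card = n ∧
  (∀ M ∈ 𝒞, M ≠ ⊤) ∧
  (∀ g : G, ∃ M ∈ 𝒞, g ∈ M) ∧
  (∀ 𝒟 : Finset (Subgroup G), 𝒟 ⊂ 𝒞 → ∃ g : G, ∀ M ∈ 𝒟, g ∉ M) ∧
  (∀ M ∈ 𝒞, IsCoatom M) ∧
  (𝒞.inf id).normalCore = ⊥

/- ### Auxiliary lemmas -/

lemma mem_normalCore' {G : Type*} [Group G] {H : Subgroup G} {x : G} :
    x ∈ H.normalCore ↔ ∀ b : G, b * x * b⁻¹ ∈ H := Iff.rfl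

lemma mem_finsetInf {G : Type*} [Group G] {ι : Type*} {s : Finset ι} {f : ι → Subgroup G}
    {x : G} : x ∈ s.inf f ↔ ∀ i ∈ s, x ∈ f i := by
  induction s using Finset.cons_induction with
  | empty => simp
  | cons a s ha ih => simp [Finset.inf_cons, Subgroup.mem_inf, ih]

lemma zmod2_mul_cases : ∀ a : Multiplicative (ZMod 2), a = 1 ∨ a = Multiplicative.ofAdd 1 := by
  decide

lemma zmod2_mul_sq : ∀ a : Multiplicative (ZMod 2), a * a = 1 := by decide

lemma zmod2_mul_comm : ∀ a b : Multiplicative (ZMod 2), a * b * a⁻¹ * b⁻¹ = 1 := by decide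

lemma zmod2_toAdd_eq_zero : ∀ a : Multiplicative (ZMod 2), a.toAdd = 0 ↔ a = 1 := by decide

lemma zmod2_toAdd_eq_one : ∀ a : Multiplicative (ZMod 2), a ≠ 1 → a.toAdd = 1 := by decide

lemma natCast_zmod2 (m : ℕ) : (m : ZMod 2) = if Even m then 0 else 1 := by
  rw [← ZMod.natCast_mod m 2]
  rcases Nat.even_or_odd m with h | h
  · rw [if_pos h, Nat.even_iff.mp h]; rfl
  · rw [if_neg (Nat.not_even_iff_odd.mpr h), Nat.odd_iff.mp h]; rfl

lemma exists_hom_of_isCoatom {G : Type*} [Group G] [Finite G] (h2 : IsPGroup 2 G)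
    {M : Subgroup G} (hM : IsCoatom M) :
    ∃ ψ : G →* Multiplicative (ZMod 2), ∀ x, ψ x = 1 ↔ x ∈ M := by
  haveI : Fact (Nat.Prime 2) := ⟨Nat.prime_two⟩
  haveI hnil : Group.IsNilpotent G := h2.isNilpotent
  haveI hMn : M.Normal := Subgroup.NormalizerCondition.normal_of_coatom M
    (normalizerCondition_of_isNilpotent) hM
  have hQ2 : IsPGroup 2 (G ⧸ M) := h2.to_quotient M
  have hsub : ∀ K : Subgroup (G ⧸ M), K = ⊥ ∨ K = ⊤ := by
    intro K
    have hle : M ≤ K.comap (QuotientGroup.mk' M) := by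
      intro m hm
      have h1 : QuotientGroup.mk' M m = 1 := (QuotientGroup.eq_one_iff m).mpr hm
      simpa [Subgroup.mem_comap, h1] using K.one_mem
    have hmc := Subgroup.map_comap_eq_self_of_surjective
      (QuotientGroup.mk'_surjective M) (H := K)
    rcases hle.lt_or_eq with h | h
    · right
      have htop : K.comap (QuotientGroup.mk' M) = ⊤ := hM.2 _ h
      rw [← hmc, htop]
      exact Subgroup.map_top_of_surjective _ (QuotientGroup.mk'_surjective M)
    · left
      rw [← hmc, ← h, eq_bot_iff]
      rintro _ ⟨m, hm, rfl⟩
      simpa [Subgroup.mem_bot] using (QuotientGroup.eq_one_iff m).mpr hm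
  have hsq : ∀ q : G ⧸ M, q * q = 1 := by
    intro q
    by_contra hq
    have hq1 : q ≠ 1 := by rintro rfl; simp at hq
    have h1 : Subgroup.zpowers (q * q) = ⊤ := by
      rcases hsub (Subgroup.zpowers (q * q)) with h | h
      · exact absurd (Subgroup.zpowers_eq_bot.mp h) hq
      · exact h
    have hmem : q ∈ Subgroup.zpowers (q * q) := h1 ▸ Subgroup.mem_top q
    obtain ⟨k, hk⟩ := hmem
    have hzz : q ^ (2 * k - 1 : ℤ) = 1 := by
      have h2k : q ^ (2 * k : ℤ) = q := by
        rw [zpow_mul, zpow_two]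
        exact hk
      rw [zpow_sub, h2k, zpow_one, mul_inv_cancel]
    have hdvd : (orderOf q : ℤ) ∣ 2 * k - 1 := orderOf_dvd_iff_zpow_eq_one.mpr hzz
    obtain ⟨m, hm⟩ := hQ2 q
    have hord : orderOf q ∣ 2 ^ m := orderOf_dvd_of_pow_eq_one hm
    obtain ⟨j, hj, hje⟩ := (Nat.dvd_prime_pow Nat.prime_two).mp hord
    have hj1 : 1 ≤ j := by
      rcases Nat.eq_zero_or_pos j with h | h
      · exfalso; apply hq1
        have : orderOf q = 1 := by rw [hje, h, pow_zero]
        exact orderOf_eq_one_iff.mp this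
      · exact h
    have h2d : (2 : ℤ) ∣ (orderOf q : ℤ) := by
      rw [hje]
      exact_mod_cast dvd_pow_self 2 (Nat.one_le_iff_ne_zero.mp hj1)
    obtain ⟨t, ht⟩ := h2d.trans hdvd
    omega
  obtain ⟨g, hg⟩ : ∃ g : G, g ∉ M := by
    by_contra h
    push_neg at h
    exact hM.1 ((Subgroup.eq_top_iff' M).mpr h)
  have hq0 : (g : G ⧸ M) ≠ 1 := fun h => hg ((QuotientGroup.eq_one_iff g).mp h)
  have hord2 : orderOf (g : G ⧸ M) = 2 :=
    orderOf_eq_prime (by rw [pow_two]; exact hsq _) hq0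
  have hztop : Subgroup.zpowers (g : G ⧸ M) = ⊤ := by
    rcases hsub (Subgroup.zpowers (g : G ⧸ M)) with h | h
    · exact absurd (Subgroup.zpowers_eq_bot.mp h) hq0
    · exact h
  have hcard : Nat.card (G ⧸ M) = 2 := by
    rw [← Subgroup.card_top, ← hztop, Nat.card_zpowers, hord2]
  have hcard2 : Nat.card (Multiplicative (ZMod 2)) = 2 := by
    simp [Nat.card_eq_fintype_card]
  let e : G ⧸ M ≃* Multiplicative (ZMod 2) := mulEquivOfPrimeCardEq hcard hcard2
  refine ⟨e.toMonoidHom.comp (QuotientGroup.mk' M), fun x => ?_⟩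
  simp only [MonoidHom.comp_apply, MulEquiv.coe_toMonoidHom]
  rw [show (1 : Multiplicative (ZMod 2)) = e 1 by simp]
  rw [e.injective.eq_iff]
  exact (QuotientGroup.eq_one_iff x)

lemma IsCCover.comap {G H : Type*} [Group G] [Group H] [DecidableEq (Subgroup G)]
    (e : G ≃* H) {n : ℕ} {𝒞 : Finset (Subgroup H)} (h : IsCCover n 𝒞) :
    IsCCover n (𝒞.image (Subgroup.comap (e : G →* H))) := by
  obtain ⟨hcard, hprop, hcov, hirr, hmax, hcore⟩ := h
  have hinj : Function.Injective (Subgroup.comap (e : G →* H)) :=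
    Subgroup.comap_injective e.surjective
  refine ⟨by rw [Finset.card_image_of_injective _ hinj, hcard], ?_, ?_, ?_, ?_, ?_⟩
  · rintro _ hm
    obtain ⟨M, hM, rfl⟩ := Finset.mem_image.mp hm
    intro htop
    apply hprop M hM
    apply hinj
    rw [htop, Subgroup.comap_top]
  · intro g
    obtain ⟨M, hM, hg⟩ := hcov (e g)
    exact ⟨M.comap (e : G →* H), Finset.mem_image_of_mem _ hM, hg⟩
  · intro 𝒟 h𝒟
    classical
    set 𝒟' := 𝒞.filter (fun M => M.comap (e : G →* H) ∈ 𝒟) with h𝒟'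
    have hss : 𝒟' ⊂ 𝒞 := by
      refine ⟨Finset.filter_subset _ _, fun hle => ?_⟩
      have : 𝒞.image (Subgroup.comap (e : G →* H)) ⊆ 𝒟 := by
        intro x hx
        obtain ⟨M, hM, rfl⟩ := Finset.mem_image.mp hx
        exact (Finset.mem_filter.mp (hle hM)).2
      exact h𝒟.2 this
    obtain ⟨g', hg'⟩ := hirr 𝒟' hss
    refine ⟨e.symm g', ?_⟩
    intro M' hM'
    obtain ⟨M, hM, rfl⟩ := Finset.mem_image.mp (h𝒟.1 hM')
    have hMem : M ∈ 𝒟' := Finset.mem_filter.mpr ⟨hM, hM'⟩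
    intro hmem
    apply hg' M hMem
    simpa using hmem
  · rintro _ hm
    obtain ⟨M, hM, rfl⟩ := Finset.mem_image.mp hm
    exact (Subgroup.isCoatom_comap e).mpr (hmax M hM)
  · have hinf : ∀ x : G, x ∈ (𝒞.image (Subgroup.comap (e : G →* H))).inf id ↔
        e x ∈ 𝒞.inf id := by
      intro x
      rw [mem_finsetInf, mem_finsetInf]
      constructor
      · intro hx M hM
        exact (hx _ (Finset.mem_image_of_mem _ hM))
      · intro hx M' hM'
        obtain ⟨M, hM, rfl⟩ := Finset.mem_image.mp hM'
        exact hx M hM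
    rw [eq_bot_iff]
    intro x hx
    have hh : e x ∈ (𝒞.inf id).normalCore := by
      rw [mem_normalCore']
      intro b
      have := (mem_normalCore'.mp hx) (e.symm b)
      rw [hinf] at this
      simpa [map_mul] using this
    rw [hcore, Subgroup.mem_bot] at hh
    have : x = 1 := by
      apply e.injective; simpa using hh
    simp [this]

lemma isCoatom_ker {A : Type*} [Group A] (ψ : A →* Multiplicative (ZMod 2))
    (hsurj : ∃ x, ψ x ≠ 1) : IsCoatom ψ.ker := by
  constructor
  · intro h
    obtain ⟨x, hx⟩ := hsurj
    exact hx (by simpa [MonoidHom.mem_ker] using h.ge (Subgroup.mem_top x))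
  · intro K hK
    obtain ⟨x, hxK, hx⟩ := SetLike.exists_of_lt hK
    rw [eq_top_iff]
    intro y _
    by_cases hy : ψ y = 1
    · exact hK.le (MonoidHom.mem_ker.mpr hy)
    · have hxv : ψ x = Multiplicative.ofAdd 1 :=
        (zmod2_mul_cases (ψ x)).resolve_left (by simpa [MonoidHom.mem_ker] using hx)
      have hyv : ψ y = Multiplicative.ofAdd 1 := (zmod2_mul_cases (ψ y)).resolve_left hy
      have hk : y * x⁻¹ ∈ ψ.ker := by
        rw [MonoidHom.mem_ker, map_mul, map_inv, hxv, hyv]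
        decide
      have := K.mul_mem (hK.le hk) hxK
      simpa using this

section Construction
variable (n : ℕ)

private def ψi (i : Fin n) : (Fin n → Multiplicative (ZMod 2)) →* Multiplicative (ZMod 2) :=
  Pi.evalMonoidHom _ i

private def ψs : (Fin n → Multiplicative (ZMod 2)) →* Multiplicative (ZMod 2) where
  toFun x := ∏ j, x j
  map_one' := by simp
  map_mul' x y := by simp [Finset.prod_mul_distrib]

private def uu (i : Fin n) : Fin n → Multiplicative (ZMod 2) :=
  fun j => if j = i then 1 else Multiplicative.ofAdd 1

private def oo : Fin n → Multiplicative (ZMod 2) := fun _ => Multiplicative.ofAdd 1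

lemma ofAdd_one_ne_one : (Multiplicative.ofAdd (1 : ZMod 2)) ≠ 1 := by decide

variable {n}

lemma ψi_uu_self (i : Fin n) : ψi n i (uu n i) = 1 := by simp [ψi, uu]

lemma ψi_uu_ne (i j : Fin n) (h : j ≠ i) : ψi n j (uu n i) = Multiplicative.ofAdd 1 := by
  simp [ψi, uu, h]

lemma ψi_oo (i : Fin n) : ψi n i (oo n) = Multiplicative.ofAdd 1 := rfl

lemma ψs_apply (x : Fin n → Multiplicative (ZMod 2)) :
    ψs n x = Multiplicative.ofAdd (∑ j, (x j).toAdd) := by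
  rw [ofAdd_sum]
  rfl

lemma ψs_oo (hev : Even n) : ψs n (oo n) = 1 := by
  rw [ψs_apply]
  have h1 : ∑ j : Fin n, ((oo n j)).toAdd = (n : ZMod 2) := by
    simp [oo]
  rw [h1, natCast_zmod2, if_pos hev]
  rfl

lemma ψs_uu (hev : Even n) (i : Fin n) : ψs n (uu n i) = Multiplicative.ofAdd 1 := by
  rw [ψs_apply]
  congr 1
  have h0 : (uu n i i).toAdd = 0 := by simp [uu]
  rw [← Finset.sum_erase (f := fun j => (uu n i j).toAdd) Finset.univ h0]
  have hterm : ∀ j ∈ Finset.univ.erase i, (uu n i j).toAdd = 1 := by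
    intro j hj
    have hne : j ≠ i := (Finset.mem_erase.mp hj).1
    simp [uu, hne]
  rw [Finset.sum_congr rfl hterm, Finset.sum_const, Finset.card_erase_of_mem (Finset.mem_univ i)]
  simp only [Finset.card_univ, Fintype.card_fin, nsmul_eq_mul, mul_one]
  have hn1 : 1 ≤ n := Fin.pos i
  have hodd : ¬ Even (n - 1) := by
    have h2 : n % 2 = 0 := Nat.even_iff.mp hev
    rw [Nat.even_iff]
    omega
  rw [natCast_zmod2, if_neg hodd]

lemma exists_cover_model (hn : 0 < n) (hev : Even n) :
    ∃ 𝒞 : Finset (Subgroup (Fin n → Multiplicative (ZMod 2))), IsCCover (n + 1) 𝒞 := by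
  classical
  set 𝒞 := insert (ψs n).ker (Finset.univ.image fun i : Fin n => (ψi n i).ker) with h𝒞
  have hkinj : Function.Injective (fun i : Fin n => (ψi n i).ker) := by
    intro i j hij
    by_contra hne
    have h1 : uu n i ∈ (ψi n i).ker := MonoidHom.mem_ker.mpr (ψi_uu_self i)
    rw [show (ψi n i).ker = (ψi n j).ker from hij] at h1
    have h2 := MonoidHom.mem_ker.mp h1
    rw [ψi_uu_ne i j (fun h => hne h.symm)] at h2
    exact ofAdd_one_ne_one h2
  have hs_ne : ∀ i : Fin n, (ψs n).ker ≠ (ψi n i).ker := by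
    intro i h
    have h1 : uu n i ∈ (ψi n i).ker := MonoidHom.mem_ker.mpr (ψi_uu_self i)
    rw [← h] at h1
    have h2 := MonoidHom.mem_ker.mp h1
    rw [ψs_uu hev i] at h2
    exact ofAdd_one_ne_one h2
  have hnotmem : (ψs n).ker ∉ Finset.univ.image fun i : Fin n => (ψi n i).ker := by
    intro h
    obtain ⟨i, _, hi⟩ := Finset.mem_image.mp h
    exact hs_ne i hi.symm
  have hmem_iff : ∀ M, M ∈ 𝒞 ↔ M = (ψs n).ker ∨ ∃ i : Fin n, M = (ψi n i).ker := by
    intro M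
    simp only [h𝒞, Finset.mem_insert, Finset.mem_image, Finset.mem_univ, true_and]
    constructor
    · rintro (h | ⟨i, hi⟩)
      · exact Or.inl h
      · exact Or.inr ⟨i, hi.symm⟩
    · rintro (h | ⟨i, hi⟩)
      · exact Or.inl h
      · exact Or.inr ⟨i, hi.symm⟩
  have hcoatom : ∀ M ∈ 𝒞, IsCoatom M := by
    intro M hM
    rcases (hmem_iff M).mp hM with h | ⟨i, h⟩
    · subst h
      refine isCoatom_ker _ ⟨uu n ⟨0, hn⟩, ?_⟩
      rw [ψs_uu hev]
      exact ofAdd_one_ne_one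
    · subst h
      refine isCoatom_ker _ ⟨oo n, ?_⟩
      rw [ψi_oo]
      exact ofAdd_one_ne_one
  refine ⟨𝒞, ?_, fun M hM => (hcoatom M hM).1, ?_, ?_, hcoatom, ?_⟩
  · rw [h𝒞, Finset.card_insert_of_notMem hnotmem,
      Finset.card_image_of_injective _ hkinj, Finset.card_univ, Fintype.card_fin]
  · intro g
    by_cases h : ∃ i, g i = 1
    · obtain ⟨i, hi⟩ := h
      refine ⟨(ψi n i).ker, (hmem_iff _).mpr (Or.inr ⟨i, rfl⟩), ?_⟩
      exact MonoidHom.mem_ker.mpr hi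
    · push_neg at h
      refine ⟨(ψs n).ker, (hmem_iff _).mpr (Or.inl rfl), ?_⟩
      rw [MonoidHom.mem_ker, ψs_apply]
      have : ∀ j, (g j).toAdd = 1 := fun j => zmod2_toAdd_eq_one _ (h j)
      rw [Finset.sum_congr rfl (fun j _ => this j), Finset.sum_const]
      simp only [Finset.card_univ, Fintype.card_fin, nsmul_eq_mul, mul_one]
      rw [natCast_zmod2, if_pos hev]
      rfl
  · intro 𝒟 h𝒟
    obtain ⟨M0, hM0C, hM0D⟩ := Finset.exists_of_ssubset h𝒟
    rcases (hmem_iff M0).mp hM0C with h | ⟨i, h⟩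
    · refine ⟨oo n, fun M hMD hmem => ?_⟩
      rcases (hmem_iff M).mp (h𝒟.1 hMD) with h' | ⟨j, h'⟩
      · exact hM0D (by rw [h, ← h']; exact hMD)
      · subst h'
        have := MonoidHom.mem_ker.mp hmem
        rw [ψi_oo] at this
        exact ofAdd_one_ne_one this
    · refine ⟨uu n i, fun M hMD hmem => ?_⟩
      rcases (hmem_iff M).mp (h𝒟.1 hMD) with h' | ⟨j, h'⟩
      · subst h'
        have := MonoidHom.mem_ker.mp hmem
        rw [ψs_uu hev] at this
        exact ofAdd_one_ne_one this
      · subst h'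
        have hji : j ≠ i := by
          intro hji
          subst hji
          exact hM0D (by rw [h]; exact hMD)
        have := MonoidHom.mem_ker.mp hmem
        rw [ψi_uu_ne i j hji] at this
        exact ofAdd_one_ne_one this
  · have hinf : 𝒞.inf id = ⊥ := by
      rw [eq_bot_iff]
      intro x hx
      have h1 := mem_finsetInf.mp hx
      have h2 : ∀ i : Fin n, x i = 1 := by
        intro i
        exact MonoidHom.mem_ker.mp (h1 _ ((hmem_iff _).mpr (Or.inr ⟨i, rfl⟩)))
      have : x = 1 := funext h2
      simp [this, Subgroup.mem_bot]
    rw [hinf]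
    exact Subgroup.normalCore_eq_self ⊥

end Construction

theorem statement_1 {G : Type*} [Group G] [Finite G] (h2 : IsPGroup 2 G)
    (n : ℕ) (hn : 0 < n) :
    (∃ 𝒞 : Finset (Subgroup G), IsCCover (n + 1) 𝒞) ↔
      Even n ∧ Nonempty (G ≃* (Fin n → Multiplicative (ZMod 2))) := by
  haveI : Fact (Nat.Prime 2) := ⟨Nat.prime_two⟩
  constructor
  · rintro ⟨𝒞, hcard, hprop, hcov, hirr, hmax, hcore⟩
    classical
    choose ψ hψ using fun (M : Subgroup G) (hM : M ∈ 𝒞) => exists_hom_of_isCoatom h2 (hmax M hM)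
    -- every square is trivial
    have hsq : ∀ x : G, x * x = 1 := by
      intro x
      have hxx : x * x ∈ (𝒞.inf id).normalCore := by
        rw [mem_normalCore']
        intro b
        rw [mem_finsetInf]
        intro M hM
        have hb : b * (x * x) * b⁻¹ = (b * x * b⁻¹) * (b * x * b⁻¹) := by group
        show b * (x * x) * b⁻¹ ∈ M
        rw [hb, ← hψ M hM, map_mul]
        exact zmod2_mul_sq _
      rw [hcore, Subgroup.mem_bot] at hxx
      exact hxx
    have hcomm : ∀ x y : G, x * y = y * x := by
      intro x y
      rw [← commutatorElement_eq_one_iff_mul_comm]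
      open scoped commutatorElement in
      have hc : ⁅x, y⁆ ∈ (𝒞.inf id).normalCore := by
        rw [mem_normalCore']
        intro b
        rw [mem_finsetInf]
        intro M hM
        have hb : b * ⁅x, y⁆ * b⁻¹ = (b*x*b⁻¹) * (b*y*b⁻¹) * (b*x*b⁻¹)⁻¹ * (b*y*b⁻¹)⁻¹ := by
          simp only [commutatorElement_def]; group
        show b * ⁅x, y⁆ * b⁻¹ ∈ M
        rw [hb, ← hψ M hM, map_mul, map_mul, map_mul, map_inv, map_inv]
        exact zmod2_mul_comm _ _
      rw [hcore, Subgroup.mem_bot] at hc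
      exact hc
    letI : CommGroup G := { (inferInstance : Group G) with mul_comm := hcomm }
    letI : Module (ZMod 2) (Additive G) := AddCommGroup.zmodModule (by
      intro x
      show (2 : ℕ) • x = 0
      rw [two_nsmul]
      exact hsq x)
    haveI : Finite (Additive G) := ‹Finite G›
    haveI : Module.Finite (ZMod 2) (Additive G) := Module.Finite.of_finite
    let idx : Fin (n+1) ≃ {x // x ∈ 𝒞} := (Finset.equivFinOfCardEq hcard).symm
    let Ψ : G → Fin (n+1) → ZMod 2 := fun g i => (ψ (idx i).1 (idx i).2 g).toAdd
    have hΨadd : ∀ x y : G, Ψ (x * y) = Ψ x + Ψ y := by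
      intro x y
      funext i
      show (ψ (idx i).1 (idx i).2 (x * y)).toAdd = _
      rw [map_mul]
      rfl
    let Φ : Additive G →ₗ[ZMod 2] (Fin (n+1) → ZMod 2) :=
      AddMonoidHom.toZModLinearMap 2
        (AddMonoidHom.mk' (fun x => Ψ x.toMul) (fun x y => hΨadd _ _))
    have hΦapply : ∀ (g : G) (i : Fin (n+1)), Φ (Additive.ofMul g) i = Ψ g i := fun _ _ => rfl
    have hΨ0 : ∀ (g : G) (i : Fin (n+1)), Ψ g i = 0 ↔ g ∈ (idx i).1 := by
      intro g i
      rw [← hψ _ (idx i).2 g]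
      exact zmod2_toAdd_eq_zero _
    have hΨ1 : ∀ (g : G) (i : Fin (n+1)), g ∉ (idx i).1 → Ψ g i = 1 := by
      intro g i hg
      exact zmod2_toAdd_eq_one _ (fun h => hg ((hψ _ (idx i).2 g).mp h))
    have hmemall : ∀ (g : G), (∀ i : Fin (n+1), g ∈ (idx i).1) → ∀ M ∈ 𝒞, g ∈ M := by
      intro g hg M hM
      have := hg (idx.symm ⟨M, hM⟩)
      rwa [Equiv.apply_symm_apply] at this
    have hinj : Function.Injective Φ := by
      rw [injective_iff_map_eq_zero]
      intro a ha
      have h1 : ∀ i : Fin (n+1), Ψ a.toMul i = 0 := fun i => congrFun ha i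
      have h2 : ∀ M ∈ 𝒞, a.toMul ∈ M :=
        hmemall _ (fun i => (hΨ0 _ i).mp (h1 i))
      have h3 : a.toMul ∈ (𝒞.inf id).normalCore := by
        rw [mem_normalCore']
        intro b
        have hb : b * a.toMul * b⁻¹ = a.toMul := by
          rw [hcomm b a.toMul, mul_assoc, mul_inv_cancel, mul_one]
        rw [hb, mem_finsetInf]
        exact h2
      rw [hcore, Subgroup.mem_bot] at h3
      exact h3
    set W := LinearMap.range Φ with hW
    have hrange : Module.finrank (ZMod 2) W = Module.finrank (ZMod 2) (Additive G) :=
      LinearMap.finrank_range_of_inj hinj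
    -- the all-ones vector is not in the range
    have hone : (fun _ => (1 : ZMod 2)) ∉ W := by
      rintro ⟨a, ha⟩
      obtain ⟨M, hM, hmem⟩ := hcov a.toMul
      set i := idx.symm ⟨M, hM⟩ with hi
      have h0 : Ψ a.toMul i = 0 := by
        rw [hΨ0]
        rw [hi, Equiv.apply_symm_apply]
        exact hmem
      have h1 : Ψ a.toMul i = 1 := congrFun ha i
      rw [h0] at h1
      exact one_ne_zero h1.symm
    -- the "all ones except one coordinate" vectors are in the range
    have hv : ∀ i0 : Fin (n+1), (fun j => if j = i0 then 0 else (1 : ZMod 2)) ∈ W := by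
      intro i0
      have hss : 𝒞.erase (idx i0).1 ⊂ 𝒞 := Finset.erase_ssubset (idx i0).2
      obtain ⟨g, hg⟩ := hirr _ hss
      refine ⟨Additive.ofMul g, ?_⟩
      funext j
      rw [hΦapply]
      by_cases hj : j = i0
      · subst hj
        rw [if_pos rfl, hΨ0]
        obtain ⟨M, hM, hmem⟩ := hcov g
        have hMj : M = (idx j).1 := by
          by_contra hne
          exact hg M (Finset.mem_erase.mpr ⟨hne, hM⟩) hmem
        rwa [← hMj]
      · rw [if_neg hj]
        apply hΨ1
        apply hg
        refine Finset.mem_erase.mpr ⟨?_, (idx j).2⟩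
        intro hval
        exact hj (idx.injective (Subtype.ext hval))
    -- parity
    have heven : Even n := by
      by_contra hodd
      apply hone
      have hsum : (fun _ => (1 : ZMod 2)) =
          ∑ i0 : Fin (n+1), (fun j => if j = i0 then 0 else (1 : ZMod 2)) := by
        funext j
        rw [Finset.sum_apply]
        have h0 : (if j = j then (0 : ZMod 2) else 1) = 0 := if_pos rfl
        rw [← Finset.sum_erase (f := fun i0 => if j = i0 then (0 : ZMod 2) else 1)
          Finset.univ h0]
        have hterm : ∀ i0 ∈ Finset.univ.erase j,
            (if j = i0 then (0 : ZMod 2) else 1) = 1 := by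
          intro i0 hi0
          rw [if_neg (fun h => (Finset.mem_erase.mp hi0).1 h.symm)]
        rw [Finset.sum_congr rfl hterm, Finset.sum_const,
          Finset.card_erase_of_mem (Finset.mem_univ j)]
        simp only [Finset.card_univ, Fintype.card_fin, nsmul_eq_mul, mul_one,
          Nat.add_sub_cancel]
        rw [natCast_zmod2, if_neg hodd]
      rw [hsum]
      exact Submodule.sum_mem _ (fun i0 _ => hv i0)
    -- dimension upper bound
    have hupper : Module.finrank (ZMod 2) (Additive G) ≤ n := by
      have hWne : W ≠ ⊤ := by
        intro h
        exact hone (h.ge Submodule.mem_top)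
      have := Submodule.finrank_lt (V := Fin (n+1) → ZMod 2) hWne
      rw [Module.finrank_fin_fun] at this
      omega
    -- dimension lower bound
    have hlower : n ≤ Module.finrank (ZMod 2) (Additive G) := by
      let u : Fin n → (Fin (n+1) → ZMod 2) :=
        fun i => fun j => if j = i.castSucc then 0 else 1
      have hu : LinearIndependent (ZMod 2) u := by
        rw [Fintype.linearIndependent_iff]
        intro c hc i0
        have happ : ∀ j : Fin (n+1), ∑ i : Fin n, c i * u i j = 0 := by
          intro j
          have := congrFun hc j
          rw [Finset.sum_apply] at this
          simpa using this
        have hlast : ∑ i : Fin n, c i = 0 := by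
          have h1 := happ (Fin.last n)
          have h2 : ∀ i : Fin n, c i * u i (Fin.last n) = c i := by
            intro i
            have : (Fin.last n) ≠ i.castSucc := (Fin.castSucc_lt_last i).ne'
            simp [u, this]
          rwa [Finset.sum_congr rfl (fun i _ => h2 i)] at h1
        have h1 := happ i0.castSucc
        have hz : c i0 * u i0 i0.castSucc = 0 := by simp [u]
        rw [← Finset.sum_erase (f := fun i => c i * u i i0.castSucc) Finset.univ hz] at h1
        have h2 : ∀ i ∈ Finset.univ.erase i0, c i * u i i0.castSucc = c i := by
          intro i hi
          have hne : i0.castSucc ≠ i.castSucc :=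
            fun h => (Finset.mem_erase.mp hi).1 (Fin.castSucc_injective n h.symm)
          simp [u, hne]
        rw [Finset.sum_congr rfl h2] at h1
        have h3 := Finset.add_sum_erase Finset.univ c (Finset.mem_univ i0)
        rw [h1, add_zero] at h3
        rw [← h3] at hlast
        exact hlast
      let w : Fin n → W := fun i => ⟨u i, hv i.castSucc⟩
      have hw : LinearIndependent (ZMod 2) w := by
        apply LinearIndependent.of_comp W.subtype
        exact hu
      have := hw.fintype_card_le_finrank
      rw [Fintype.card_fin] at this
      omega
    have hrank : Module.finrank (ZMod 2) (Additive G) = n := le_antisymm hupper (by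
      rw [← hrange] at hlower ⊢
      exact hlower)
    refine ⟨heven, ?_⟩
    let b := Module.finBasisOfFinrankEq (ZMod 2) (Additive G) hrank
    let e1 : Additive G ≃ₗ[ZMod 2] (Fin n → ZMod 2) := b.equivFun
    let e3 : G ≃* Multiplicative (Fin n → ZMod 2) := AddEquiv.toMultiplicativeRight e1.toAddEquiv
    exact ⟨e3.trans (MulEquiv.funMultiplicative (ι := Fin n) (G := ZMod 2))⟩
  · rintro ⟨hev, ⟨e⟩⟩
    classical
    obtain ⟨𝒞₀, h𝒞₀⟩ := exists_cover_model hn hev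
    exact ⟨_, h𝒞₀.comap e⟩
end

section
/- There exists a nontrivial minimal blocking set of size 7 in PG(3,3). -/
/-- The seven points (as vectors). -/
def bsVec : Fin 7 → Fin 4 → ZMod 3 :=
  ![![1,2,2,2], ![1,2,0,1], ![0,0,1,1], ![1,1,0,2], ![0,1,2,2], ![1,1,0,0], ![0,1,0,2]]

/-- Tangent hyperplane coefficients for each point. -/
def bsTan : Fin 7 → Fin 4 → ZMod 3 :=
  ![![0,1,0,2], ![1,0,0,2], ![0,1,0,0], ![1,0,1,1], ![0,1,1,0], ![0,0,0,1], ![1,0,2,0]]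

lemma bs_ne_zero : ∀ i, bsVec i ≠ 0 := by decide

lemma bs_dist : ∀ i j : Fin 7, i ≠ j → ∀ a : ZMod 3, a • bsVec j ≠ bsVec i := by decide

lemma bs_block : ∀ c : Fin 4 → ZMod 3, c ≠ 0 → ∃ i, ∑ k, bsVec i k * c k = 0 := by decide

lemma bs_tan : ∀ i, (∑ k, bsVec i k * bsTan i k = 0) ∧
    ∀ j, j ≠ i → ∑ k, bsVec j k * bsTan i k ≠ 0 := by decide

lemma bs_line : ∀ i j : Fin 7, i ≠ j →
    (∀ k, ∀ a : ZMod 3, a • bsVec k ≠ bsVec i + bsVec j) ∨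
    (∀ k, ∀ a : ZMod 3, a • bsVec k ≠ bsVec i - bsVec j) := by decide

open Projectivization Module LinearMap in
lemma rep_mem_iff {v : Fin 4 → ZMod 3} (hv : v ≠ 0)
    (W : Submodule (ZMod 3) (Fin 4 → ZMod 3)) :
    (Projectivization.mk (ZMod 3) v hv).rep ∈ W ↔ v ∈ W := by
  obtain ⟨a, ha⟩ := (mk_eq_mk_iff (ZMod 3) _ _ (rep_nonzero _) hv).1
    (mk_rep (Projectivization.mk (ZMod 3) v hv))
  rw [← ha, Units.smul_def, W.smul_mem_iff a.ne_zero]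

open Module LinearMap in
lemma ker_finrank_three (f : (Fin 4 → ZMod 3) →ₗ[ZMod 3] ZMod 3)
    (x : Fin 4 → ZMod 3) (hx : f x ≠ 0) : finrank (ZMod 3) (ker f) = 3 := by
  have hsurj : Function.Surjective f := fun y =>
    ⟨(y * (f x)⁻¹) • x, by rw [map_smul, smul_eq_mul, mul_assoc, inv_mul_cancel₀ hx, mul_one]⟩
  have h := f.finrank_range_add_finrank_ker
  rw [range_eq_top.2 hsurj, finrank_top, finrank_self, Module.finrank_fin_fun] at h
  omega

open Module LinearMap in
/-- The functional with coefficient vector `c`. -/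
noncomputable def bsFun (c : Fin 4 → ZMod 3) : (Fin 4 → ZMod 3) →ₗ[ZMod 3] ZMod 3 :=
  ∑ k, c k • (LinearMap.proj k)

lemma bsFun_apply (c x : Fin 4 → ZMod 3) : bsFun c x = ∑ k, x k * c k := by
  simp [bsFun, mul_comm]

open Projectivization Module LinearMap in
theorem statement_5 :
    ∃ B : Set (Projectivization (ZMod 3) (Fin (3 + 1) → ZMod 3)),
      B.ncard = 7 ∧ IsMinimalBlockingSet B ∧
      -- nontrivial: `B` contains no line of `PG(3,3)`
      ¬ ∃ W : Submodule (ZMod 3) (Fin (3 + 1) → ZMod 3),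
          Module.finrank (ZMod 3) W = 2 ∧
          {x : Projectivization (ZMod 3) (Fin (3 + 1) → ZMod 3) | x.rep ∈ W} ⊆ B := by
  classical
  set P : Fin 7 → Projectivization (ZMod 3) (Fin 4 → ZMod 3) :=
    fun i => Projectivization.mk (ZMod 3) (bsVec i) (bs_ne_zero i) with hP
  have hinj : Function.Injective P := by
    intro i j hij
    by_contra hne
    obtain ⟨a, ha⟩ := (mk_eq_mk_iff (ZMod 3) _ _ _ _).1 hij
    exact bs_dist i j hne (a : ZMod 3) (by rwa [Units.smul_def] at ha)
  refine ⟨Set.range P, ?_, ⟨?_, ?_⟩, ?_⟩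
  · rw [← Nat.card_coe_set_eq, Nat.card_range_of_injective hinj]
    simp
  · -- blocking
    intro W hW
    have hWt : W < ⊤ := by
      rcases lt_or_eq_of_le (le_top (a := W)) with h | h
      · exact h
      · rw [h, finrank_top, Module.finrank_fin_fun] at hW; omega
    obtain ⟨f, hf0, hfW⟩ := W.exists_dual_map_eq_bot_of_lt_top hWt inferInstance
    have hWker : W ≤ ker f := le_ker_iff_map.2 hfW
    have hWeq : W = ker f := by
      refine Submodule.eq_of_le_of_finrank_le hWker ?_
      have : ker f < ⊤ := lt_top_iff_ne_top.2 fun h => hf0 (LinearMap.ker_eq_top.1 h)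
      have := Submodule.finrank_lt this.ne
      rw [Module.finrank_fin_fun] at this
      omega
    set c : Fin 4 → ZMod 3 := fun k => f (fun j => if k = j then 1 else 0) with hc
    have hfx : ∀ x, f x = ∑ k, x k * c k := by
      intro x
      rw [LinearMap.pi_apply_eq_sum_univ f x]
      simp [hc, smul_eq_mul]
    have hcne : c ≠ 0 := by
      intro h
      apply hf0
      ext x
      simp [hfx, h]
    obtain ⟨i, hi⟩ := bs_block c hcne
    refine ⟨P i, Set.mem_range_self i, ?_⟩
    rw [hP, rep_mem_iff, hWeq, LinearMap.mem_ker, hfx]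
    exact hi
  · -- minimality
    intro B' hss hblk
    obtain ⟨p, hpB, hpB'⟩ := Set.exists_of_ssubset hss
    obtain ⟨i, hi⟩ := hpB
    set f := bsFun (bsTan i) with hf
    obtain ⟨j, hj⟩ := exists_ne i
    have hfj : f (bsVec j) ≠ 0 := by
      rw [hf, bsFun_apply]; exact (bs_tan i).2 j hj
    obtain ⟨x, hxB', hxW⟩ := hblk (ker f) (ker_finrank_three f _ hfj)
    obtain ⟨m, hm⟩ := hss.subset hxB'
    rw [← hm, hP, rep_mem_iff, LinearMap.mem_ker, hf, bsFun_apply] at hxW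
    rcases eq_or_ne m i with h | h
    · exact hpB' (by rwa [← hi, ← h, hm])
    · exact (bs_tan i).2 m h hxW
  · -- no line contained in B
    rintro ⟨W, hW2, hsub⟩
    have hWne : W ≠ ⊥ := by
      intro h
      rw [h, finrank_bot] at hW2
      omega
    obtain ⟨u, huW, hu0⟩ := Submodule.exists_mem_ne_zero_of_ne_bot hWne
    have hmemB : ∀ (w : Fin 4 → ZMod 3) (hw : w ≠ 0), w ∈ W →
        ∃ k : Fin 7, ∃ t : (ZMod 3)ˣ, t • w = bsVec k := by
      intro w hw hwW
      have : Projectivization.mk (ZMod 3) w hw ∈ Set.range P := by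
        apply hsub
        exact (rep_mem_iff hw W).2 hwW
      obtain ⟨k, hk⟩ := this
      obtain ⟨t, ht⟩ := (mk_eq_mk_iff (ZMod 3) _ _ _ _).1 hk
      exact ⟨k, t, ht⟩
    obtain ⟨a, t, hta⟩ := hmemB u hu0 huW
    have haW : bsVec a ∈ W := hta ▸ W.smul_mem _ huW
    have hnle : ¬ W ≤ Submodule.span (ZMod 3) {bsVec a} := by
      intro hle
      have h1 := Submodule.finrank_mono hle
      rw [hW2, finrank_span_singleton (bs_ne_zero a)] at h1
      omega
    obtain ⟨w, hwW, hwsp⟩ := SetLike.not_le_iff_exists.1 hnle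
    have hw0 : w ≠ 0 := fun h => hwsp (h ▸ Submodule.zero_mem _)
    obtain ⟨b, s, hsb⟩ := hmemB w hw0 hwW
    have hbW : bsVec b ∈ W := hsb ▸ W.smul_mem _ hwW
    have hbsp : bsVec b ∉ Submodule.span (ZMod 3) {bsVec a} := by
      intro h
      exact hwsp (by
        have := Submodule.smul_mem _ ((s : ZMod 3)⁻¹) h
        rwa [← hsb, Units.smul_def, smul_smul,
          inv_mul_cancel₀ s.ne_zero, one_smul] at this)
    have hab : a ≠ b := fun h =>
      hbsp (h ▸ Submodule.mem_span_singleton_self _)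
    rcases bs_line a b hab with h | h
    · have hs0 : bsVec a + bsVec b ≠ 0 := by
        intro h0
        exact bs_dist a b hab (-1 : ZMod 3)
          (by rw [neg_smul, one_smul]; exact neg_eq_of_add_eq_zero_left h0)
      obtain ⟨k, t', ht'⟩ := hmemB _ hs0 (W.add_mem haW hbW)
      exact h k ((t'⁻¹ : (ZMod 3)ˣ) : ZMod 3)
        (by rw [← Units.smul_def, ← ht', inv_smul_smul])
    · have hs0 : bsVec a - bsVec b ≠ 0 := by
        intro h0
        apply bs_dist a b hab (1 : ZMod 3)
        rw [one_smul]
        exact (sub_eq_zero.1 h0).symm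
      obtain ⟨k, t', ht'⟩ := hmemB _ hs0 (W.sub_mem haW hbW)
      exact h k ((t'⁻¹ : (ZMod 3)ˣ) : ZMod 3)
        (by rw [← Units.smul_def, ← ht', inv_smul_smul])
end

section
/- There exists a nontrivial minimal blocking set of size 9 in PG(4,3). -/
set_option maxRecDepth 8000


namespace S7Aux

/-- The 9 vectors of our blocking set. -/
def vs : Fin 9 → (Fin 5 → ZMod 3) :=
  ![![1,1,1,0,0], ![0,0,0,1,2], ![1,2,0,2,2], ![0,1,1,2,1], ![1,1,1,1,2],
    ![0,1,1,0,0], ![1,1,0,1,0], ![1,1,0,2,1], ![0,1,1,0,1]]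

/-- Tangent hyperplane coefficient vectors. -/
def ts : Fin 9 → (Fin 5 → ZMod 3) :=
  ![![1,1,1,0,2], ![0,1,0,0,0], ![1,0,1,0,1], ![0,0,1,1,0], ![0,0,1,2,0],
    ![1,1,2,0,2], ![1,0,1,2,0], ![1,1,0,0,1], ![1,0,1,1,2]]

lemma vs_ne_zero : ∀ i, vs i ≠ 0 := by decide

lemma blocking_fact : ∀ a : Fin 5 → ZMod 3, a ≠ 0 →
    ∃ i : Fin 9, ∑ j, vs i j * a j = 0 := by decide

lemma tangent_fact : ∀ i k : Fin 9, (∑ j, vs k j * ts i j = 0) ↔ k = i := by decide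

lemma ne_fact : ∀ i : Fin 9, ∃ k : Fin 9, ∑ j, vs k j * ts i j ≠ 0 := by decide

lemma indep_fact : ∀ g : Fin 3 → ZMod 3,
    ∑ i, g i • vs (Fin.castLE (by norm_num) i) = 0 → ∀ i, g i = 0 := by decide

/-- The linear functional with coefficient vector `a`. -/
def lfun (a : Fin 5 → ZMod 3) : (Fin 5 → ZMod 3) →ₗ[ZMod 3] ZMod 3 where
  toFun v := ∑ j, v j * a j
  map_add' u v := by simp [add_mul, Finset.sum_add_distrib]
  map_smul' c v := by simp [Finset.mul_sum, mul_assoc]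

@[simp] lemma lfun_apply (a v : Fin 5 → ZMod 3) : lfun a v = ∑ j, v j * a j := rfl

/-- Scale invariance of submodule membership of representatives. -/
lemma rep_mem_iff (v : Fin 5 → ZMod 3) (hv : v ≠ 0)
    (W : Submodule (ZMod 3) (Fin 5 → ZMod 3)) :
    (Projectivization.mk (ZMod 3) v hv).rep ∈ W ↔ v ∈ W := by
  obtain ⟨a, ha⟩ := (Projectivization.mk_eq_mk_iff (ZMod 3) _ v
    (Projectivization.rep_nonzero _) hv).mp (Projectivization.mk_rep _)
  rw [← ha, Units.smul_def, Submodule.smul_mem_iff _ a.ne_zero]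

/-- The points of the blocking set. -/
noncomputable def pt (i : Fin 9) : Projectivization (ZMod 3) (Fin 5 → ZMod 3) :=
  Projectivization.mk (ZMod 3) (vs i) (vs_ne_zero i)

lemma pt_injective : Function.Injective pt := by
  intro i k h
  by_contra hne
  obtain ⟨a, ha⟩ := (Projectivization.mk_eq_mk_iff (ZMod 3) _ _ _ _).mp h
  have h1 : ∑ j, vs i j * ts i j = 0 := (tangent_fact i i).mpr rfl
  have h2 : ∑ j, vs k j * ts i j ≠ 0 := fun hc => hne (((tangent_fact i k).mp hc).symm ▸ rfl)
  rw [← ha] at h1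
  simp only [Units.smul_def, Pi.smul_apply, smul_eq_mul, mul_assoc,
    ← Finset.mul_sum] at h1
  exact h2 ((mul_eq_zero.mp h1).resolve_left a.ne_zero)

lemma range_lfun_eq_top (a v : Fin 5 → ZMod 3)
    (hv : lfun a v ≠ 0) : LinearMap.range (lfun a) = ⊤ := by
  rw [LinearMap.range_eq_top]
  intro c
  exact ⟨(c * (lfun a v)⁻¹) • v, by
    rw [map_smul, smul_eq_mul, mul_assoc, inv_mul_cancel₀ hv, mul_one]⟩

lemma finrank_ker_lfun (a v : Fin 5 → ZMod 3) (hv : lfun a v ≠ 0) :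
    Module.finrank (ZMod 3) (LinearMap.ker (lfun a)) = 4 := by
  have h := LinearMap.finrank_range_add_finrank_ker (lfun a)
  rw [range_lfun_eq_top a v hv, finrank_top] at h
  simp only [Module.finrank_self, Module.finrank_pi, Fintype.card_fin] at h
  omega

lemma finrank_pi5 : Module.finrank (ZMod 3) (Fin 5 → ZMod 3) = 5 := by
  simp [Module.finrank_pi]

/-- The set `B`. -/
noncomputable def B : Set (Projectivization (ZMod 3) (Fin 5 → ZMod 3)) := Set.range pt

lemma B_blocking : IsBlockingSet B := by
  intro W hW
  -- build a functional with kernel `W`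
  have hfd : FiniteDimensional (ZMod 3) ((Fin 5 → ZMod 3) ⧸ W) := inferInstance
  have hq : Module.finrank (ZMod 3) ((Fin 5 → ZMod 3) ⧸ W) = 1 := by
    have := Submodule.finrank_quotient_add_finrank W
    rw [hW] at this
    simp [Module.finrank_pi] at this
    omega
  have hq' : Module.finrank (ZMod 3) ((Fin 5 → ZMod 3) ⧸ W) =
      Module.finrank (ZMod 3) (ZMod 3) := by rw [hq, Module.finrank_self]
  let e : ((Fin 5 → ZMod 3) ⧸ W) ≃ₗ[ZMod 3] ZMod 3 := LinearEquiv.ofFinrankEq _ _ hq'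
  let φ : (Fin 5 → ZMod 3) →ₗ[ZMod 3] ZMod 3 := (e : _ →ₗ[ZMod 3] ZMod 3) ∘ₗ W.mkQ
  have hker : LinearMap.ker φ = W := by
    rw [LinearMap.ker_comp, LinearEquiv.ker, Submodule.comap_bot, Submodule.ker_mkQ]
  set a : Fin 5 → ZMod 3 := fun i => φ (fun j => if i = j then 1 else 0) with ha
  have hφ : ∀ v, φ v = ∑ j, v j * a j := by
    intro v
    rw [LinearMap.pi_apply_eq_sum_univ φ v]
    simp [ha, smul_eq_mul]
  have hane : a ≠ 0 := by
    intro h0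
    have : ∀ v, φ v = 0 := by intro v; rw [hφ, h0]; simp
    have hWtop : W = ⊤ := by
      rw [← hker]
      exact eq_top_iff.mpr fun v _ => this v
    rw [hWtop, finrank_top] at hW
    simp [Module.finrank_pi] at hW
  obtain ⟨i, hi⟩ := blocking_fact a hane
  refine ⟨pt i, Set.mem_range_self i, ?_⟩
  rw [pt, rep_mem_iff, ← hker]
  exact LinearMap.mem_ker.mpr (by rw [hφ]; exact hi)

lemma B_minimal : IsMinimalBlockingSet B := by
  refine ⟨B_blocking, ?_⟩
  intro B' hB' hbl
  obtain ⟨x, hxB, hxB'⟩ := Set.exists_of_ssubset hB'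
  obtain ⟨i, rfl⟩ := hxB
  obtain ⟨v, hv⟩ := ne_fact i
  have hv' : lfun (ts i) (vs v) ≠ 0 := by simpa using hv
  obtain ⟨y, hyB', hyW⟩ := hbl (LinearMap.ker (lfun (ts i))) (finrank_ker_lfun _ _ hv')
  obtain ⟨k, rfl⟩ := hB'.1 hyB'
  rw [pt, rep_mem_iff] at hyW
  have : ∑ j, vs k j * ts i j = 0 := by simpa using hyW
  rw [(tangent_fact i k).mp this] at hyB'
  exact hxB' hyB'

lemma B_ncard : B.ncard = 9 := by
  rw [B, ← Set.image_univ, Set.ncard_image_of_injective _ pt_injective,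
    Set.ncard_univ, Nat.card_eq_fintype_card, Fintype.card_fin]

theorem statement_7' :
    ∃ B : Set (Projectivization (ZMod 3) (Fin (4 + 1) → ZMod 3)),
      B.ncard = 9 ∧ IsMinimalBlockingSet B ∧
      ¬ ∃ W : Submodule (ZMod 3) (Fin (4 + 1) → ZMod 3),
          Module.finrank (ZMod 3) W = 2 ∧
          {x : Projectivization (ZMod 3) (Fin (4 + 1) → ZMod 3) | x.rep ∈ W} ⊆ B := by
  refine ⟨B, B_ncard, B_minimal, ?_⟩
  rintro ⟨W, hW2, hsub⟩
  set L : Set (Projectivization (ZMod 3) (Fin 5 → ZMod 3)) := {x | x.rep ∈ W} with hL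
  -- some point of B is not in L
  have hnotall : ∃ i, vs i ∉ W := by
    by_contra hall
    push_neg at hall
    have hli : LinearIndependent (ZMod 3) (fun i : Fin 3 => vs (Fin.castLE (by norm_num) i)) :=
      Fintype.linearIndependent_iff.mpr indep_fact
    have hle : Submodule.span (ZMod 3)
        (Set.range (fun i : Fin 3 => vs (Fin.castLE (by norm_num) i))) ≤ W := by
      rw [Submodule.span_le]
      rintro _ ⟨i, rfl⟩
      exact hall _
    have h3 := finrank_span_eq_card hli
    have := Submodule.finrank_mono hle
    rw [h3, hW2, Fintype.card_fin] at this
    omega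
  obtain ⟨i, hiW⟩ := hnotall
  have hptL : pt i ∉ L := by
    rw [hL, Set.mem_setOf_eq, pt, rep_mem_iff]
    exact hiW
  have hLsub : L ⊂ B := by
    rw [Set.ssubset_def]
    exact ⟨hsub, fun h => hptL (h (Set.mem_range_self i))⟩
  refine B_minimal.2 L hLsub ?_
  -- L is a blocking set: every hyperplane meets the line W
  intro H hH
  have hfin : 1 ≤ Module.finrank (ZMod 3) ↥(W ⊓ H) := by
    have hsum := Submodule.finrank_sup_add_finrank_inf_eq W H
    have hle' : Module.finrank (ZMod 3) ↥(W ⊔ H) ≤ 5 := by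
      have := Submodule.finrank_le (W ⊔ H)
      simpa [Module.finrank_pi] using this
    rw [hW2, hH] at hsum
    omega
  have hbot : W ⊓ H ≠ ⊥ := by
    intro h0
    rw [h0, finrank_bot] at hfin
    omega
  obtain ⟨v, hvWH, hv0⟩ := Submodule.exists_mem_ne_zero_of_ne_bot hbot
  refine ⟨Projectivization.mk (ZMod 3) v hv0, ?_, ?_⟩
  · rw [hL, Set.mem_setOf_eq, rep_mem_iff]
    exact hvWH.1
  · rw [rep_mem_iff]
    exact hvWH.2

end S7Aux

theorem statement_7 :
    ∃ B : Set (Projectivization (ZMod 3) (Fin (4 + 1) → ZMod 3)),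
      B.ncard = 9 ∧ IsMinimalBlockingSet B ∧
      -- nontrivial: `B` contains no line of `PG(4,3)`
      ¬ ∃ W : Submodule (ZMod 3) (Fin (4 + 1) → ZMod 3),
          Module.finrank (ZMod 3) W = 2 ∧
          {x : Projectivization (ZMod 3) (Fin (4 + 1) → ZMod 3) | x.rep ∈ W} ⊆ B := by
  exact S7Aux.statement_7'
end

section
/- Let p be a prime number and let n be a positive integer. A finite p-group G admits a 𝔠_{n+1}-cover if and only if there exists a positive integer m such that G is isomorphic to (C_p)^{m+1} and PG(m,p) contains a minimal blocking set B with d(B) = m and |B| = n+1. -/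
open Module Projectivization
open scoped LinearAlgebra.Projectivization

namespace Stmt11


variable {K : Type*} [Field K] {m : ℕ}



/-- dot product bilinear form on `Fin (m+1) → K`. -/
noncomputable def β : (Fin (m+1) → K) →ₗ[K] Module.Dual K (Fin (m+1) → K) :=
  LinearMap.mk₂ K (fun x y => ∑ i, x i * y i)
    (fun x x' y => by simp [add_mul, Finset.sum_add_distrib])
    (fun c x y => by simp [Finset.mul_sum, mul_assoc])
    (fun x y y' => by simp [mul_add, Finset.sum_add_distrib])
    (fun c x y => by simp [Finset.mul_sum, mul_left_comm])

lemma β_apply (x y : Fin (m+1) → K) : β x y = ∑ i, x i * y i := rfl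

lemma β_comm (x y : Fin (m+1) → K) : β x y = β y x := by
  simp only [β_apply]
  exact Finset.sum_congr rfl fun i _ => mul_comm _ _

lemma β_single (x : Fin (m+1) → K) (i : Fin (m+1)) : β x (Pi.single i 1) = x i := by
  simp [β_apply, Pi.single_apply, Finset.sum_ite_eq']

lemma β_injective : Function.Injective (β (K := K) (m := m)) := by
  intro x y h
  funext i
  have := congrArg (fun f => f (Pi.single i 1)) h
  simpa [β_single] using this

lemma β_surjective : Function.Surjective (β (K := K) (m := m)) := by
  have h : finrank K (Fin (m+1) → K) = finrank K (Module.Dual K (Fin (m+1) → K)) :=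
    (Subspace.dual_finrank_eq).symm
  exact (LinearMap.injective_iff_surjective_of_finrank_eq_finrank h).1 β_injective

/-- The hyperplane orthogonal to `v`. -/
noncomputable def perp (v : Fin (m+1) → K) : Submodule K (Fin (m+1) → K) :=
  LinearMap.ker (β v)

lemma mem_perp {v x : Fin (m+1) → K} : x ∈ perp v ↔ β v x = 0 := Iff.rfl

lemma perp_comm {v x : Fin (m+1) → K} : x ∈ perp v ↔ v ∈ perp x := by
  rw [mem_perp, mem_perp, β_comm]

lemma β_ne_zero {v : Fin (m+1) → K} (hv : v ≠ 0) : β v ≠ 0 := by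
  intro h
  exact hv (β_injective (by rw [h, map_zero]))

lemma finrank_perp {v : Fin (m+1) → K} (hv : v ≠ 0) : finrank K (perp v) = m := by
  have h0 := β_ne_zero hv
  obtain ⟨y, hy⟩ : ∃ y, β v y ≠ 0 := by
    by_contra h
    push_neg at h
    exact h0 (LinearMap.ext fun y => h y)
  have hrange : LinearMap.range (β v) = ⊤ := by
    rw [eq_top_iff]
    intro c _
    exact ⟨(c / β v y) • y, by rw [map_smul, smul_eq_mul, div_mul_cancel₀ c hy]⟩
  have := LinearMap.finrank_range_add_finrank_ker (β v)
  rw [hrange, finrank_top, Module.finrank_self, Module.finrank_fin_fun] at this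
  rw [perp]
  omega

lemma isCoatom_iff_finrank {W : Submodule K (Fin (m+1) → K)} :
    IsCoatom W ↔ finrank K W = m := by
  constructor
  · intro hW
    obtain ⟨f, hf, hmap⟩ := Submodule.exists_dual_map_eq_bot_of_lt_top
      (lt_top_iff_ne_top.mpr hW.1) inferInstance
    have hle : W ≤ LinearMap.ker f := by
      intro x hx
      have : f x ∈ Submodule.map f W := ⟨x, hx, rfl⟩
      rw [hmap] at this
      simpa using this
    have hker_ne : LinearMap.ker f ≠ ⊤ := by
      intro h
      exact hf (LinearMap.ext fun x => by
        have : x ∈ LinearMap.ker f := h ▸ Submodule.mem_top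
        simpa using this)
    have hWf : W = LinearMap.ker f := by
      rcases hle.lt_or_eq with h | h
      · exact absurd (hW.2 _ h) hker_ne
      · exact h
    obtain ⟨v, hv⟩ := β_surjective f
    have hv0 : v ≠ 0 := by rintro rfl; rw [map_zero] at hv; exact hf hv.symm
    rw [hWf, ← hv]
    exact finrank_perp hv0
  · intro hW
    constructor
    · intro h
      rw [h, finrank_top, Module.finrank_fin_fun] at hW
      omega
    · intro U hU
      apply Submodule.eq_top_of_finrank_eq
      have h1 := Submodule.finrank_lt_finrank_of_lt hU
      have h2 := Submodule.finrank_le U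
      rw [Module.finrank_fin_fun] at h2 ⊢
      omega

lemma isCoatom_perp {v : Fin (m+1) → K} (hv : v ≠ 0) : IsCoatom (perp v) :=
  isCoatom_iff_finrank.2 (finrank_perp hv)

lemma exists_perp_eq {W : Submodule K (Fin (m+1) → K)} (hW : IsCoatom W) :
    ∃ v : Fin (m+1) → K, v ≠ 0 ∧ perp v = W := by
  obtain ⟨f, hf, hmap⟩ := Submodule.exists_dual_map_eq_bot_of_lt_top
    (lt_top_iff_ne_top.mpr hW.1) inferInstance
  have hle : W ≤ LinearMap.ker f := by
    intro x hx
    have : f x ∈ Submodule.map f W := ⟨x, hx, rfl⟩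
    rw [hmap] at this
    simpa using this
  have hker_ne : LinearMap.ker f ≠ ⊤ := by
    intro h
    exact hf (LinearMap.ext fun x => by
      have : x ∈ LinearMap.ker f := h ▸ Submodule.mem_top
      simpa using this)
  have hWf : W = LinearMap.ker f := by
    rcases hle.lt_or_eq with h | h
    · exact absurd (hW.2 _ h) hker_ne
    · exact h
  obtain ⟨v, hv⟩ := β_surjective f
  have hv0 : v ≠ 0 := by rintro rfl; rw [map_zero] at hv; exact hf hv.symm
  exact ⟨v, hv0, by rw [perp, hv, hWf]⟩

/-- two nonzero functionals with the same kernel are proportional -/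
lemma dual_smul_of_ker_eq {W' : Type*} [AddCommGroup W'] [Module K W']
    {f g : Module.Dual K W'} (hg : g ≠ 0)
    (h : LinearMap.ker f = LinearMap.ker g) : ∃ c : K, f = c • g := by
  obtain ⟨x, hx⟩ : ∃ x, g x ≠ 0 := by
    by_contra hc
    push_neg at hc
    exact hg (LinearMap.ext fun y => hc y)
  refine ⟨f x / g x, LinearMap.ext fun y => ?_⟩
  have hz : y - (g y / g x) • x ∈ LinearMap.ker g := by
    simp only [LinearMap.mem_ker, map_sub, map_smul, smul_eq_mul]
    field_simp
    ring
  rw [← h] at hz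
  simp only [LinearMap.mem_ker, map_sub, map_smul, smul_eq_mul, sub_eq_zero] at hz
  rw [hz]
  simp only [LinearMap.smul_apply, smul_eq_mul]
  field_simp

lemma perp_eq_perp {v w : Fin (m+1) → K} (hv : v ≠ 0) (hw : w ≠ 0)
    (h : perp v = perp w) : ∃ c : Kˣ, w = c • v := by
  obtain ⟨c, hc⟩ := dual_smul_of_ker_eq (f := β w) (g := β v) (β_ne_zero hv) (by
    rw [← perp, ← perp, h])
  have hc0 : c ≠ 0 := by
    rintro rfl
    rw [zero_smul] at hc
    exact β_ne_zero hw hc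
  refine ⟨Units.mk0 c hc0, ?_⟩
  apply β_injective
  have hsm : ((Units.mk0 c hc0 : Kˣ) • v) = c • v := rfl
  rw [hsm, hc, map_smul]

lemma perp_unit_smul (c : Kˣ) (v : Fin (m+1) → K) : perp ((c : K) • v) = perp v := by
  unfold perp
  have : β ((c : K) • v) = (c : K) • β v := map_smul β (c : K) v
  rw [this, LinearMap.ker_smul _ _ c.ne_zero]

lemma iInf_perp_eq_bot_iff (S : Set (Fin (m+1) → K)) :
    (⨅ v ∈ S, perp v) = ⊥ ↔ Submodule.span K S = ⊤ := by
  constructor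
  · intro h
    by_contra hs
    obtain ⟨f, hf, hmap⟩ := Submodule.exists_dual_map_eq_bot_of_lt_top
      (lt_top_iff_ne_top.mpr hs) inferInstance
    obtain ⟨w, hw⟩ := β_surjective f
    have hw0 : w ≠ 0 := by rintro rfl; rw [map_zero] at hw; exact hf hw.symm
    have hwmem : w ∈ ⨅ v ∈ S, perp v := by
      simp only [Submodule.mem_iInf]
      intro v hv
      rw [← perp_comm, mem_perp, hw]
      have : f v ∈ Submodule.map f (Submodule.span K S) :=
        ⟨v, Submodule.subset_span hv, rfl⟩
      rw [hmap] at this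
      simpa using this
    rw [h] at hwmem
    exact hw0 (by simpa using hwmem)
  · intro h
    rw [eq_bot_iff]
    intro x hx
    simp only [Submodule.mem_iInf] at hx
    have hS : S ⊆ (perp x : Set _) := fun v hv => perp_comm.mp (hx v hv)
    have : (⊤ : Submodule K (Fin (m+1) → K)) ≤ perp x := by
      rw [← h]
      exact Submodule.span_le.mpr hS
    have hx0 : β x = 0 := LinearMap.ext fun y => (mem_perp).1 (this Submodule.mem_top)
    rw [Submodule.mem_bot]
    exact β_injective (by simp [hx0])



noncomputable def toHyp (x : ℙ K (Fin (m+1) → K)) : Submodule K (Fin (m+1) → K) :=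
  perp x.rep

lemma isCoatom_toHyp (x : ℙ K (Fin (m+1) → K)) : IsCoatom (toHyp x) :=
  isCoatom_perp x.rep_nonzero

lemma toHyp_mk {v : Fin (m+1) → K} (hv : v ≠ 0) :
    toHyp (Projectivization.mk K v hv) = perp v := by
  obtain ⟨a, ha⟩ := Projectivization.exists_smul_eq_mk_rep K v hv
  rw [toHyp, ← ha]
  exact perp_unit_smul a v

lemma toHyp_injective : Function.Injective (toHyp (K := K) (m := m)) := by
  intro x y h
  obtain ⟨c, hc⟩ := perp_eq_perp x.rep_nonzero y.rep_nonzero h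
  rw [← x.mk_rep, ← y.mk_rep]
  rw [Projectivization.mk_eq_mk_iff]
  exact ⟨c⁻¹, by rw [hc]; simp⟩

open scoped Classical in
noncomputable def toPt (W : Submodule K (Fin (m+1) → K)) : ℙ K (Fin (m+1) → K) :=
  if h : ∃ v : Fin (m+1) → K, v ≠ 0 ∧ perp v = W then
    Projectivization.mk K h.choose h.choose_spec.1
  else Projectivization.mk K (Pi.single 0 1) (by
    intro hc
    have := congrFun hc 0
    simp at this)

lemma toHyp_toPt {W : Submodule K (Fin (m+1) → K)} (hW : IsCoatom W) :
    toHyp (toPt W) = W := by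
  have h : ∃ v : Fin (m+1) → K, v ≠ 0 ∧ perp v = W := exists_perp_eq hW
  rw [toPt, dif_pos h, toHyp_mk h.choose_spec.1, h.choose_spec.2]

lemma toPt_toHyp (x : ℙ K (Fin (m+1) → K)) : toPt (toHyp x) = x := by
  apply toHyp_injective
  exact toHyp_toPt (isCoatom_toHyp x)

lemma blocking_iff (B : Set (ℙ K (Fin (m+1) → K))) :
    IsBlockingSet B ↔ ∀ v : Fin (m+1) → K, v ≠ 0 → ∃ x ∈ B, v ∈ toHyp x := by
  constructor
  · intro hB v hv
    obtain ⟨x, hxB, hx⟩ := hB (perp v) (finrank_perp hv)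
    exact ⟨x, hxB, perp_comm.mp hx⟩
  · intro h W hW
    obtain ⟨v, hv, hperp⟩ := exists_perp_eq (isCoatom_iff_finrank.mpr hW)
    obtain ⟨x, hxB, hx⟩ := h v hv
    exact ⟨x, hxB, by rw [← hperp]; exact perp_comm.mp hx⟩

/-- from a submodule cover to a minimal blocking set -/
lemma subcover_to_blocking {N : ℕ} (hN : 0 < N) (𝒞 : Finset (Submodule K (Fin (m+1) → K)))
    (hcard : 𝒞.card = N)
    (hcover : ∀ v : Fin (m+1) → K, ∃ W ∈ 𝒞, v ∈ W)
    (hirr : ∀ 𝒟 : Finset (Submodule K (Fin (m+1) → K)), 𝒟 ⊂ 𝒞 → ∃ v, ∀ W ∈ 𝒟, v ∉ W)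
    (hcoatom : ∀ W ∈ 𝒞, IsCoatom W)
    (hinf : 𝒞.inf id = ⊥) :
    ∃ B : Set (ℙ K (Fin (m+1) → K)), IsMinimalBlockingSet B ∧
      finrank K (projSpan B) = m + 1 ∧ B.ncard = N := by
  classical
  set B : Set (ℙ K (Fin (m+1) → K)) := toPt '' (𝒞 : Set _) with hB
  have hmemB : ∀ x ∈ B, toHyp x ∈ 𝒞 ∧ toPt (toHyp x) = x := by
    rintro x ⟨W, hW, rfl⟩
    rw [toHyp_toPt (hcoatom W hW)]
    exact ⟨hW, rfl⟩
  have hblock : IsBlockingSet B := by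
    rw [blocking_iff]
    intro v hv
    obtain ⟨W, hW, hvW⟩ := hcover v
    refine ⟨toPt W, ⟨W, hW, rfl⟩, ?_⟩
    rw [toHyp_toPt (hcoatom W hW)]
    exact hvW
  refine ⟨B, ⟨hblock, ?_⟩, ?_, ?_⟩
  · -- minimality
    intro B' hB' hblock'
    obtain ⟨x₀, hx₀B, hx₀B'⟩ : ∃ x₀ ∈ B, x₀ ∉ B' := Set.exists_of_ssubset hB'
    set 𝒟 : Finset (Submodule K (Fin (m+1) → K)) :=
      𝒞.filter (fun W => toPt W ∈ B') with h𝒟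
    have h𝒟ss : 𝒟 ⊂ 𝒞 := by
      refine ⟨Finset.filter_subset _ _, fun hc => ?_⟩
      obtain ⟨hx₀𝒞, hx₀eq⟩ := hmemB x₀ hx₀B
      have : toHyp x₀ ∈ 𝒟 := hc hx₀𝒞
      rw [h𝒟, Finset.mem_filter, hx₀eq] at this
      exact hx₀B' this.2
    obtain ⟨v, hv⟩ := hirr 𝒟 h𝒟ss
    -- v ≠ 0 or B' empty; handle both
    rw [blocking_iff] at hblock'
    rcases Set.eq_empty_or_nonempty B' with hE | ⟨x', hx'⟩
    · -- B' empty: blocking fails since exists nonzero vector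
      obtain ⟨x, hxB, hx⟩ := hblock' (Pi.single 0 1) (by
        intro hc
        have := congrFun hc 0
        simp at this)
      rw [hE] at hxB
      simp at hxB
    · have hx'B : x' ∈ B := hB'.1 hx'
      obtain ⟨hx'𝒞, hx'eq⟩ := hmemB x' hx'B
      have hx'𝒟 : toHyp x' ∈ 𝒟 := by
        rw [h𝒟, Finset.mem_filter, hx'eq]
        exact ⟨hx'𝒞, hx'⟩
      have hv0 : v ≠ 0 := by
        rintro rfl
        exact hv _ hx'𝒟 (toHyp x').zero_mem
      obtain ⟨x, hxB', hxv⟩ := hblock' v hv0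
      have hxB : x ∈ B := hB'.1 hxB'
      obtain ⟨hx𝒞, hxeq⟩ := hmemB x hxB
      have : toHyp x ∈ 𝒟 := by
        rw [h𝒟, Finset.mem_filter, hxeq]
        exact ⟨hx𝒞, hxB'⟩
      exact hv _ this hxv
  · -- span
    have h1 : (⨅ v ∈ (Projectivization.rep '' B), perp v)
        = ⨅ x ∈ B, toHyp x := iInf_image
    have h2 : (⨅ x ∈ B, toHyp x) = ⨅ W ∈ (𝒞 : Set _), toHyp (toPt W) := by
      rw [hB]; exact iInf_image
    have h3 : (⨅ W ∈ (𝒞 : Set _), toHyp (toPt W)) = ⨅ W ∈ (𝒞 : Set _), W :=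
      iInf_congr fun W => iInf_congr fun hW => toHyp_toPt (hcoatom W hW)
    have h4 : (⨅ W ∈ (𝒞 : Set _), W) = 𝒞.inf id := by
      rw [Finset.inf_id_eq_sInf, sInf_eq_iInf]
    have hbot : (⨅ v ∈ (Projectivization.rep '' B), perp v) = ⊥ := by
      rw [h1, h2, h3, h4, hinf]
    have hspan : Submodule.span K (Projectivization.rep '' B) = ⊤ :=
      (iInf_perp_eq_bot_iff _).1 hbot
    rw [projSpan, hspan, finrank_top, Module.finrank_fin_fun]
  · -- cardinality
    have hinj : Set.InjOn toPt (𝒞 : Set (Submodule K (Fin (m+1) → K))) := by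
      intro W hW W' hW' h
      have := congrArg toHyp h
      rwa [toHyp_toPt (hcoatom W hW), toHyp_toPt (hcoatom W' hW')] at this
    rw [hB, Set.ncard_image_of_injOn hinj, Set.ncard_coe_finset, hcard]

lemma blocking_to_subcover {N : ℕ} (hN : 0 < N)
    (B : Set (ℙ K (Fin (m+1) → K)))
    (hmin : IsMinimalBlockingSet B)
    (hrank : finrank K (projSpan B) = m + 1)
    (hcard : B.ncard = N) :
    ∃ 𝒞 : Finset (Submodule K (Fin (m+1) → K)), 𝒞.card = N ∧
      (∀ v : Fin (m+1) → K, ∃ W ∈ 𝒞, v ∈ W) ∧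
      (∀ 𝒟 : Finset (Submodule K (Fin (m+1) → K)), 𝒟 ⊂ 𝒞 → ∃ v, ∀ W ∈ 𝒟, v ∉ W) ∧
      (∀ W ∈ 𝒞, IsCoatom W) ∧ 𝒞.inf id = ⊥ := by
  classical
  have hfin : B.Finite := by
    by_contra h
    rw [Set.Infinite.ncard h] at hcard
    omega
  set 𝒞 : Finset (Submodule K (Fin (m+1) → K)) := hfin.toFinset.image toHyp with h𝒞
  have hcard𝒞 : 𝒞.card = N := by
    rw [h𝒞, Finset.card_image_of_injective _ toHyp_injective,
      ← Set.ncard_eq_toFinset_card B hfin, hcard]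
  have hmem𝒞 : ∀ W, W ∈ 𝒞 ↔ ∃ x ∈ B, toHyp x = W := by
    intro W
    simp [h𝒞, hfin.mem_toFinset]
  have hcoatom : ∀ W ∈ 𝒞, IsCoatom W := by
    intro W hW
    obtain ⟨x, _, rfl⟩ := (hmem𝒞 W).1 hW
    exact isCoatom_toHyp x
  refine ⟨𝒞, hcard𝒞, ?_, ?_, hcoatom, ?_⟩
  · -- cover
    intro v
    by_cases hv : v = 0
    · obtain ⟨W, hW⟩ := Finset.card_pos.mp (by omega : 0 < 𝒞.card)
      exact ⟨W, hW, hv ▸ W.zero_mem⟩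
    · obtain ⟨x, hxB, hx⟩ := (blocking_iff B).1 hmin.1 v hv
      exact ⟨toHyp x, (hmem𝒞 _).2 ⟨x, hxB, rfl⟩, hx⟩
  · -- irredundant
    intro 𝒟 h𝒟
    obtain ⟨W₀, hW₀𝒞, hW₀𝒟⟩ := Finset.exists_of_ssubset h𝒟
    obtain ⟨x₀, hx₀B, rfl⟩ := (hmem𝒞 W₀).1 hW₀𝒞
    set B' : Set (ℙ K (Fin (m+1) → K)) := {x ∈ B | toHyp x ∈ 𝒟} with hB'
    have hB'B : B' ⊂ B := by
      refine ssubset_of_subset_of_ne (fun x hx => hx.1) (fun h => ?_)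
      have : x₀ ∈ B' := h ▸ hx₀B
      exact hW₀𝒟 this.2
    have hnb := hmin.2 B' hB'B
    rw [blocking_iff] at hnb
    push_neg at hnb
    obtain ⟨v, hv0, hval⟩ := hnb
    refine ⟨v, fun W hW𝒟 => ?_⟩
    obtain ⟨x, hxB, rfl⟩ := (hmem𝒞 W).1 (h𝒟.subset hW𝒟)
    exact hval x ⟨hxB, hW𝒟⟩
  · -- inf
    have hspan : Submodule.span K (Projectivization.rep '' B) = ⊤ := by
      apply Submodule.eq_top_of_finrank_eq
      rw [← projSpan, hrank, Module.finrank_fin_fun]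
    have hbot := (iInf_perp_eq_bot_iff (Projectivization.rep '' B)).2 hspan
    have h1 : (⨅ v ∈ (Projectivization.rep '' B), perp v)
        = ⨅ x ∈ B, toHyp x := iInf_image
    have h2 : (⨅ x ∈ B, toHyp x) = ⨅ W ∈ (𝒞 : Set (Submodule K (Fin (m+1) → K))), W := by
      rw [h𝒞, Finset.coe_image, Set.Finite.coe_toFinset]
      exact (iInf_image (f := toHyp) (g := fun W => W) (t := B)).symm
    have h4 : (⨅ W ∈ (𝒞 : Set (Submodule K (Fin (m+1) → K))), W) = 𝒞.inf id := by
      rw [Finset.inf_id_eq_sInf, sInf_eq_iInf]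
    rw [← h4, ← h2, ← h1, hbot]



lemma mem_finset_inf' {G : Type*} [Group G] {ι : Type*} {s : Finset ι}
    {f : ι → Subgroup G} {x : G} : x ∈ s.inf f ↔ ∀ i ∈ s, x ∈ f i := by
  classical
  induction s using Finset.cons_induction with
  | empty => simp
  | cons a s ha ih => simp [Finset.inf_cons, Subgroup.mem_inf, ih]

lemma mem_finset_inf {G : Type*} [Group G] {s : Finset (Subgroup G)} {x : G} :
    x ∈ s.inf id ↔ ∀ M ∈ s, x ∈ M := mem_finset_inf'

lemma mem_normalCore_iff {G : Type*} [Group G] {H : Subgroup G} {a : G} :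
    a ∈ H.normalCore ↔ ∀ b : G, b * a * b⁻¹ ∈ H := Iff.rfl

open scoped Classical in
lemma IsCCover.map {G H : Type*} [Group G] [Group H] (e : G ≃* H) {N : ℕ}
    {𝒞 : Finset (Subgroup G)} (h : IsCCover N 𝒞) :
    IsCCover N (𝒞.image (Subgroup.map (e : G →* H))) := by
  obtain ⟨hcard, hne, hcov, hirr, hcoat, hcore⟩ := h
  have hinj : Function.Injective (Subgroup.map (e : G →* H)) :=
    (MulEquiv.mapSubgroup e).injective
  have hmem : ∀ (M : Subgroup G) (x : H), x ∈ Subgroup.map (e : G →* H) M ↔ e.symm x ∈ M :=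
    fun M x => Subgroup.mem_map_equiv
  refine ⟨?_, ?_, ?_, ?_, ?_, ?_⟩
  · rw [Finset.card_image_of_injective _ hinj, hcard]
  · intro M' hM'
    obtain ⟨M, hM, rfl⟩ := Finset.mem_image.1 hM'
    intro htop
    apply hne M hM
    have := congrArg (Subgroup.map (e.symm : H →* G)) htop
    rwa [Subgroup.map_map, Subgroup.map_top_of_surjective _ e.symm.surjective,
      show (e.symm : H →* G).comp (e : G →* H) = MonoidHom.id G from
        MonoidHom.ext fun x => e.symm_apply_apply x, Subgroup.map_id] at this
  · intro g
    obtain ⟨M, hM, hgM⟩ := hcov (e.symm g)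
    exact ⟨_, Finset.mem_image_of_mem _ hM, (hmem M g).2 hgM⟩
  · intro 𝒟 h𝒟
    obtain ⟨𝒟', h𝒟'sub, rfl⟩ := Finset.subset_image_iff.1 h𝒟.subset
    have h𝒟'ss : 𝒟' ⊂ 𝒞 := by
      refine ⟨h𝒟'sub, fun hc => h𝒟.2 ?_⟩
      intro W hW
      obtain ⟨M, hM, rfl⟩ := Finset.mem_image.1 hW
      exact Finset.mem_image_of_mem _ (hc hM)
    obtain ⟨g, hg⟩ := hirr 𝒟' h𝒟'ss
    refine ⟨e g, fun M' hM' => ?_⟩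
    obtain ⟨M, hM, rfl⟩ := Finset.mem_image.1 hM'
    rw [hmem M (e g), e.symm_apply_apply]
    exact hg M hM
  · intro M' hM'
    obtain ⟨M, hM, rfl⟩ := Finset.mem_image.1 hM'
    exact (OrderIso.isCoatom_iff (MulEquiv.mapSubgroup e) M).2 (hcoat M hM)
  · rw [Subgroup.eq_bot_iff_forall]
    intro x hx
    rw [mem_normalCore_iff] at hx
    have hx' : e.symm x ∈ (𝒞.inf id).normalCore := by
      rw [mem_normalCore_iff]
      intro b
      have := hx (e b)
      rw [mem_finset_inf]
      intro M hM
      have h2 := hx (e b)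
      rw [mem_finset_inf] at h2
      have h3 := h2 _ (Finset.mem_image_of_mem _ hM)
      rw [hmem] at h3
      simpa [map_mul] using h3
    rw [hcore] at hx'
    have : e.symm x = 1 := hx'
    have := congrArg e this
    simpa using this

open scoped commutatorElement in
lemma elementary_of_ccover {p : ℕ} [Fact p.Prime] {G : Type*} [Group G] [Finite G]
    (hG : IsPGroup p G) {N : ℕ} {𝒞 : Finset (Subgroup G)} (h : IsCCover N 𝒞) :
    (∀ a b : G, a * b = b * a) ∧ (∀ g : G, g ^ p = 1) ∧ 𝒞.inf id = ⊥ := by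
  obtain ⟨hcard, hne, hcov, hirr, hcoat, hcore⟩ := h
  have hnil : Group.IsNilpotent G := hG.isNilpotent
  have hnc : NormalizerCondition G := normalizerCondition_of_isNilpotent
  have key : ∀ M ∈ 𝒞, (∀ g h : G, ⁅g, h⁆ ∈ M) ∧ (∀ g : G, g ^ p ∈ M) := by
    intro M hM
    haveI hnorm : M.Normal := Subgroup.NormalizerCondition.normal_of_coatom M hnc (hcoat M hM)
    have hsurj := QuotientGroup.mk'_surjective M
    have hgen : ∀ x : G ⧸ M, x ≠ 1 → Subgroup.zpowers x = ⊤ := by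
      intro x hx
      have hlt : M < Subgroup.comap (QuotientGroup.mk' M) (Subgroup.zpowers x) := by
        rw [SetLike.lt_iff_le_and_exists]
        constructor
        · intro g hg
          have : QuotientGroup.mk' M g = 1 := (QuotientGroup.eq_one_iff g).2 hg
          rw [Subgroup.mem_comap, this]
          exact Subgroup.one_mem _
        · obtain ⟨g, hg⟩ := hsurj x
          refine ⟨g, ?_, fun hgM => ?_⟩
          · rw [Subgroup.mem_comap, hg]
            exact Subgroup.mem_zpowers x
          · exact hx (hg ▸ (QuotientGroup.eq_one_iff g).2 hgM)
      have htop := (hcoat M hM).2 _ hlt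
      have := congrArg (Subgroup.map (QuotientGroup.mk' M)) htop
      rwa [Subgroup.map_comap_eq_self_of_surjective hsurj,
        Subgroup.map_top_of_surjective _ hsurj] at this
    have hQp : ∀ x : G ⧸ M, x ^ p = 1 := by
      intro x
      by_cases hx : x = 1
      · rw [hx, one_pow]
      obtain ⟨j, hj⟩ := IsPGroup.iff_orderOf.mp (hG.to_quotient M) x
      have hp1 : 1 < p := (Fact.out : p.Prime).one_lt
      have hj0 : j ≠ 0 := by
        rintro rfl
        rw [pow_zero] at hj
        exact hx (orderOf_eq_one_iff.mp hj)
      set y := x ^ (p ^ (j-1)) with hy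
      have hyp : y ^ p = 1 := by
        rw [hy, ← pow_mul, ← pow_succ, Nat.sub_add_cancel
          (Nat.one_le_iff_ne_zero.mpr hj0), ← hj, pow_orderOf_eq_one]
      have hy1 : y ≠ 1 := by
        intro h1
        have hdvd : orderOf x ∣ p ^ (j-1) := orderOf_dvd_of_pow_eq_one h1
        rw [hj] at hdvd
        have hle := (Nat.pow_dvd_pow_iff_le_right hp1).1 hdvd
        omega
      obtain ⟨t, ht⟩ : x ∈ Subgroup.zpowers y := (hgen y hy1) ▸ Subgroup.mem_top x
      rw [← ht, ← zpow_natCast, ← zpow_mul, mul_comm, zpow_mul, zpow_natCast, hyp, one_zpow]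
    have hQcomm : ∀ x z : G ⧸ M, x * z = z * x := by
      intro x z
      by_cases hx : x = 1
      · rw [hx, one_mul, mul_one]
      obtain ⟨t, ht⟩ : z ∈ Subgroup.zpowers x := (hgen x hx) ▸ Subgroup.mem_top z
      rw [← ht]
      exact (Commute.zpow_right (Commute.refl x) t).eq
    constructor
    · intro g h
      rw [← QuotientGroup.eq_one_iff]
      have : ((⁅g, h⁆ : G) : G ⧸ M) = ⁅(g : G ⧸ M), (h : G ⧸ M)⁆ := by
        simp [commutatorElement_def]
      rw [this]
      exact commutatorElement_eq_one_iff_mul_comm.mpr (hQcomm _ _)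
    · intro g
      rw [← QuotientGroup.eq_one_iff]
      have : ((g ^ p : G) : G ⧸ M) = ((g : G ⧸ M)) ^ p := by simp
      rw [this]
      exact hQp _
  have hcommutator : commutator G ≤ 𝒞.inf id := by
    rw [commutator_def, Subgroup.commutator_le]
    intro g _ h _
    exact mem_finset_inf.2 fun M hM => (key M hM).1 g h
  have hcommbot : commutator G = ⊥ := by
    rw [eq_bot_iff, ← hcore]
    exact Subgroup.normal_le_normalCore.2 hcommutator
  have hcomm : ∀ a b : G, a * b = b * a := by
    intro a b
    have : ⁅a, b⁆ ∈ commutator G :=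
      Subgroup.commutator_mem_commutator (Subgroup.mem_top a) (Subgroup.mem_top b)
    rw [hcommbot, Subgroup.mem_bot] at this
    exact commutatorElement_eq_one_iff_mul_comm.mp this
  haveI hnormI : (𝒞.inf id).Normal := by
    constructor
    intro x hx g
    have : g * x * g⁻¹ = x := by
      rw [hcomm g x, mul_assoc, mul_inv_cancel, mul_one]
    rwa [this]
  have hinf_bot : 𝒞.inf id = ⊥ := by
    rw [← hcore]
    exact (Subgroup.normalCore_eq_self _).symm
  refine ⟨hcomm, fun g => ?_, hinf_bot⟩
  have : g ^ p ∈ 𝒞.inf id := mem_finset_inf.2 fun M hM => (key M hM).2 g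
  rwa [hinf_bot, Subgroup.mem_bot] at this



lemma exists_mulequiv {p : ℕ} [Fact p.Prime] {G : Type*} [Group G] [Finite G]
    (hcomm : ∀ a b : G, a * b = b * a) (hpow : ∀ g : G, g ^ p = 1) :
    ∃ k : ℕ, Nonempty (G ≃* Multiplicative (Fin k → ZMod p)) := by
  letI cg : CommGroup G := { ‹Group G› with mul_comm := hcomm }
  have hsmul : ∀ x : Additive G, p • x = 0 := by
    intro x
    have h2 := congrArg Additive.ofMul (hpow (Additive.toMul x))
    rw [ofMul_pow] at h2
    simpa using h2
  letI : Module (ZMod p) (Additive G) := AddCommGroup.zmodModule hsmul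
  haveI : Finite (Additive G) := ‹Finite G›
  haveI hfin : Module.Finite (ZMod p) (Additive G) := Module.Finite.of_finite (R := ZMod p) (M := Additive G)
  haveI hfree : Module.Free (ZMod p) (Additive G) :=
    Module.Free.of_divisionRing (ZMod p) (Additive G)
  have b : Basis (Fin (Module.finrank (ZMod p) (Additive G))) (ZMod p) (Additive G) :=
    @Module.finBasis (ZMod p) (Additive G) _ _ _ hfree _ hfin
  refine ⟨Module.finrank (ZMod p) (Additive G), ⟨?_⟩⟩
  exact (MulEquiv.multiplicativeAdditive G).symm.trans
    (AddEquiv.toMultiplicative b.equivFun.toAddEquiv)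

variable {p : ℕ} [Fact p.Prime] {m : ℕ}

noncomputable def σIso (p m : ℕ) [Fact p.Prime] :
    Subgroup (Multiplicative (Fin (m+1) → ZMod p)) ≃o
      Submodule (ZMod p) (Fin (m+1) → ZMod p) :=
  Subgroup.toAddSubgroup'.trans (AddSubgroup.toZModSubmodule p)

lemma mem_σIso {S : Subgroup (Multiplicative (Fin (m+1) → ZMod p))}
    {v : Fin (m+1) → ZMod p} :
    v ∈ σIso p m S ↔ Multiplicative.ofAdd v ∈ S := Iff.rfl

lemma mem_σIso_symm {W : Submodule (ZMod p) (Fin (m+1) → ZMod p)}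
    {x : Multiplicative (Fin (m+1) → ZMod p)} :
    x ∈ (σIso p m).symm W ↔ x.toAdd ∈ W := Iff.rfl

lemma submodule_mem_finset_inf {R M : Type*} [Ring R] [AddCommGroup M] [Module R M]
    {s : Finset (Submodule R M)} {x : M} :
    x ∈ s.inf id ↔ ∀ W ∈ s, x ∈ W := by
  rw [Finset.inf_id_eq_sInf, Submodule.mem_sInf]
  simp

lemma grp_mem_finset_inf {G : Type*} [Group G] {s : Finset (Subgroup G)} {x : G} :
    x ∈ s.inf id ↔ ∀ M ∈ s, x ∈ M := by
  rw [Finset.inf_id_eq_sInf, Subgroup.mem_sInf]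
  simp

open scoped Classical in
lemma ccover_iff_subcover (N : ℕ) :
    (∃ 𝒞 : Finset (Subgroup (Multiplicative (Fin (m+1) → ZMod p))), IsCCover N 𝒞) ↔
    (∃ 𝒞 : Finset (Submodule (ZMod p) (Fin (m+1) → ZMod p)), 𝒞.card = N ∧
      (∀ v : Fin (m+1) → ZMod p, ∃ W ∈ 𝒞, v ∈ W) ∧
      (∀ 𝒟 : Finset (Submodule (ZMod p) (Fin (m+1) → ZMod p)), 𝒟 ⊂ 𝒞 →
        ∃ v, ∀ W ∈ 𝒟, v ∉ W) ∧
      (∀ W ∈ 𝒞, IsCoatom W) ∧ 𝒞.inf id = ⊥) := by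
  have hmem := fun (S : Subgroup (Multiplicative (Fin (m+1) → ZMod p)))
    (v : Fin (m+1) → ZMod p) => (mem_σIso (S := S) (v := v))
  constructor
  · rintro ⟨𝒞, hcard, hne, hcov, hirr, hcoat, hcore⟩
    have hnorm : ∀ S : Subgroup (Multiplicative (Fin (m+1) → ZMod p)), S.Normal :=
      fun S => Subgroup.normal_of_comm S
    have hinf : 𝒞.inf id = ⊥ := by
      rw [← hcore]
      exact (Subgroup.normalCore_eq_self _).symm
    refine ⟨𝒞.image (σIso p m), ?_, ?_, ?_, ?_, ?_⟩
    · rw [Finset.card_image_of_injective _ (σIso p m).injective, hcard]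
    · intro v
      obtain ⟨S, hS, hvS⟩ := hcov (Multiplicative.ofAdd v)
      exact ⟨σIso p m S, Finset.mem_image_of_mem _ hS, (hmem S v).2 hvS⟩
    · intro 𝒟 h𝒟
      obtain ⟨𝒟', h𝒟'sub, rfl⟩ := Finset.subset_image_iff.1 h𝒟.subset
      have h𝒟'ss : 𝒟' ⊂ 𝒞 := by
        refine ⟨h𝒟'sub, fun hc => h𝒟.2 fun W hW => ?_⟩
        obtain ⟨S, hS, rfl⟩ := Finset.mem_image.1 hW
        exact Finset.mem_image_of_mem _ (hc hS)
      obtain ⟨g, hg⟩ := hirr 𝒟' h𝒟'ss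
      refine ⟨g.toAdd, fun W hW => ?_⟩
      obtain ⟨S, hS, rfl⟩ := Finset.mem_image.1 hW
      intro hc
      exact hg S hS ((hmem S g.toAdd).1 hc)
    · intro W hW
      obtain ⟨S, hS, rfl⟩ := Finset.mem_image.1 hW
      exact (OrderIso.isCoatom_iff (σIso p m) S).2 (hcoat S hS)
    · rw [eq_bot_iff]
      intro v hv
      rw [submodule_mem_finset_inf] at hv
      have : Multiplicative.ofAdd v ∈ 𝒞.inf id := by
        rw [grp_mem_finset_inf]
        intro S hS
        exact (hmem S v).1 (hv _ (Finset.mem_image_of_mem _ hS))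
      rw [hinf, Subgroup.mem_bot] at this
      rw [Submodule.mem_bot]
      exact congrArg Multiplicative.toAdd this
  · rintro ⟨𝒞, hcard, hcov, hirr, hcoat, hinf⟩
    refine ⟨𝒞.image (σIso p m).symm, ?_, ?_, ?_, ?_, ?_, ?_⟩
    · rw [Finset.card_image_of_injective _ (σIso p m).symm.injective, hcard]
    · intro S hS
      obtain ⟨W, hW, rfl⟩ := Finset.mem_image.1 hS
      exact ((hcoat W hW).1 ∘ fun h => by
        simpa using congrArg (σIso p m) (h ▸ rfl : (σIso p m).symm W = ⊤))
    · intro g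
      obtain ⟨W, hW, hgW⟩ := hcov g.toAdd
      exact ⟨(σIso p m).symm W, Finset.mem_image_of_mem _ hW, hgW⟩
    · intro 𝒟 h𝒟
      obtain ⟨𝒟', h𝒟'sub, rfl⟩ := Finset.subset_image_iff.1 h𝒟.subset
      have h𝒟'ss : 𝒟' ⊂ 𝒞 := by
        refine ⟨h𝒟'sub, fun hc => h𝒟.2 fun S hS => ?_⟩
        obtain ⟨W, hW, rfl⟩ := Finset.mem_image.1 hS
        exact Finset.mem_image_of_mem _ (hc hW)
      obtain ⟨v, hv⟩ := hirr 𝒟' h𝒟'ss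
      refine ⟨Multiplicative.ofAdd v, fun S hS => ?_⟩
      obtain ⟨W, hW, rfl⟩ := Finset.mem_image.1 hS
      intro hc
      exact hv W hW ((mem_σIso_symm).1 hc)
    · intro S hS
      obtain ⟨W, hW, rfl⟩ := Finset.mem_image.1 hS
      exact (OrderIso.isCoatom_iff (σIso p m).symm W).2 (hcoat W hW)
    · have hbot : (𝒞.image (σIso p m).symm).inf id = ⊥ := by
        rw [eq_bot_iff]
        intro g hg
        rw [grp_mem_finset_inf] at hg
        have : g.toAdd ∈ 𝒞.inf id := by
          rw [submodule_mem_finset_inf]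
          intro W hW
          exact (mem_σIso_symm).1 (hg _ (Finset.mem_image_of_mem _ hW))
        rw [hinf, Submodule.mem_bot] at this
        rw [Subgroup.mem_bot]
        exact this
      rw [hbot]
      exact Subgroup.normalCore_eq_self ⊥


end Stmt11

open Stmt11 in
theorem statement_11 (p : ℕ) [Fact p.Prime] (n : ℕ) (hn : 0 < n)
    {G : Type*} [Group G] [Finite G] (hG : IsPGroup p G) :
    (∃ 𝒞 : Finset (Subgroup G), IsCCover (n + 1) 𝒞) ↔
      ∃ m : ℕ, 0 < m ∧ Nonempty (G ≃* (Fin (m + 1) → Multiplicative (ZMod p))) ∧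
        ∃ B : Set (Projectivization (ZMod p) (Fin (m + 1) → ZMod p)),
          IsMinimalBlockingSet B ∧
          Module.finrank (ZMod p) (projSpan B) = m + 1 ∧
          B.ncard = n + 1 := by
  constructor
  · rintro ⟨𝒞, hC⟩
    obtain ⟨hcomm, hpow, -⟩ := elementary_of_ccover hG hC
    obtain ⟨k, ⟨e⟩⟩ := exists_mulequiv hcomm hpow
    have hnt : Nontrivial G := by
      by_contra h
      rw [not_nontrivial_iff_subsingleton] at h
      obtain ⟨M, hM⟩ := Finset.card_pos.mp (by rw [hC.1]; exact Nat.succ_pos n)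
      apply hC.2.1 M hM
      rw [eq_top_iff]
      intro x _
      rw [Subsingleton.elim x 1]
      exact M.one_mem
    have hk : k ≠ 0 := by
      rintro rfl
      obtain ⟨x, y, hxy⟩ := hnt
      haveI : Subsingleton (Multiplicative (Fin 0 → ZMod p)) :=
        ⟨fun a b => Subsingleton.elim a b⟩
      exact hxy (e.injective (Subsingleton.elim _ _))
    obtain ⟨m, rfl⟩ : ∃ m, k = m + 1 := ⟨k - 1, by omega⟩
    have hC' := IsCCover.map e hC
    obtain ⟨𝒞'', h1, h2, h3, h4, h5⟩ :=
      (ccover_iff_subcover (n + 1)).1 ⟨_, hC'⟩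
    obtain ⟨B, hmin, hrank, hcardB⟩ :=
      subcover_to_blocking (Nat.succ_pos n) 𝒞'' h1 h2 h3 h4 h5
    have hm : 0 < m := by
      rcases Nat.eq_zero_or_pos m with rfl | hm
      · exfalso
        obtain ⟨x, -, hx⟩ := hmin.1 ⊥ (by rw [finrank_bot])
        rw [Submodule.mem_bot] at hx
        exact x.rep_nonzero hx
      · exact hm
    exact ⟨m, hm,
      ⟨e.trans (MulEquiv.piMultiplicative (fun _ : Fin (m + 1) => ZMod p))⟩,
      B, hmin, hrank, hcardB⟩
  · rintro ⟨m, hm, ⟨e⟩, B, hmin, hrank, hcardB⟩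
    have e' : G ≃* Multiplicative (Fin (m + 1) → ZMod p) :=
      e.trans (MulEquiv.piMultiplicative (fun _ : Fin (m + 1) => ZMod p)).symm
    obtain ⟨𝒞, h1, h2, h3, h4, h5⟩ :=
      blocking_to_subcover (Nat.succ_pos n) B hmin hrank hcardB
    obtain ⟨𝒞g, hC⟩ := (ccover_iff_subcover (n + 1)).2 ⟨𝒞, h1, h2, h3, h4, h5⟩
    exact ⟨_, IsCCover.map e'.symm hC⟩
end

section
/- Let p be a prime number and let G be a finite p-group admitting a 𝔠_n-cover for some positive integer n. Then p ≤ n − 1. -/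
theorem statement_12 (p : ℕ) (hp : p.Prime) {G : Type*} [Group G] [Finite G]
    (hG : IsPGroup p G) (n : ℕ) (hn : 0 < n)
    (hcov : ∃ 𝒞 : Finset (Subgroup G), IsCCover n 𝒞) :
    p ≤ n - 1 := by
  classical
  haveI : Fact p.Prime := ⟨hp⟩
  haveI : Fintype G := Fintype.ofFinite G
  obtain ⟨𝒞, hcard, hproper, hcover, -, -, -⟩ := hcov
  -- G is nontrivial
  obtain ⟨M₀, hM₀⟩ : ∃ M, M ∈ 𝒞 :=
    Finset.card_pos.mp (by rw [hcard]; exact hn)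
  haveI : Nontrivial G := by
    by_contra h
    haveI : Subsingleton G := not_nontrivial_iff_subsingleton.mp h
    exact hproper M₀ hM₀ (Subsingleton.elim _ _)
  obtain ⟨k, hk⟩ := IsPGroup.iff_card.mp hG
  have hp2 : 2 ≤ p := hp.two_le
  have hk1 : 1 ≤ k := by
    rcases Nat.eq_zero_or_pos k with h0 | h
    · have h1 : 1 < Nat.card G := by
        rw [Nat.card_eq_fintype_card]; exact Fintype.one_lt_card
      rw [hk, h0, pow_zero] at h1; omega
    · exact h
  -- each M in 𝒞 has card ≤ p^(k-1)
  have hMcard : ∀ M ∈ 𝒞, Nat.card M ≤ p ^ (k - 1) := by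
    intro M hM
    have hdvd : Nat.card M ∣ p ^ k := hk ▸ Subgroup.card_subgroup_dvd_card M
    obtain ⟨j, hjk, hj⟩ := (Nat.dvd_prime_pow hp).mp hdvd
    have hlt : Nat.card M < Nat.card G := by
      have := Subgroup.card_le_card_group M
      rcases lt_or_eq_of_le this with h | h
      · exact h
      · exact absurd (Subgroup.card_eq_iff_eq_top M |>.mp h) (hproper M hM)
    have : j < k := by
      by_contra hc
      push_neg at hc
      have : j = k := le_antisymm hjk hc
      rw [hj, this, ← hk] at hlt; omega
    rw [hj]
    exact Nat.pow_le_pow_right hp.pos (by omega)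
  -- counting
  have key : Nat.card G - 1 ≤ n * (p ^ (k - 1) - 1) := by
    have hsub : Finset.univ.erase (1 : G) ⊆
        𝒞.biUnion (fun M => (M : Set G).toFinset.erase 1) := by
      intro g hg
      obtain ⟨M, hM, hgM⟩ := hcover g
      refine Finset.mem_biUnion.mpr ⟨M, hM, ?_⟩
      simp only [Finset.mem_erase, Set.mem_toFinset] at *
      exact ⟨hg.1, hgM⟩
    have h1 := Finset.card_le_card hsub
    have h2 := Finset.card_biUnion_le (s := 𝒞)
      (t := fun M => (M : Set G).toFinset.erase 1)
    have h3 : ∀ M ∈ 𝒞, ((M : Set G).toFinset.erase 1).card ≤ p ^ (k - 1) - 1 := by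
      intro M hM
      have : ((M : Set G).toFinset.erase 1).card = Nat.card M - 1 := by
        rw [Finset.card_erase_of_mem (by simp [Set.mem_toFinset])]
        congr 1
        rw [Set.toFinset_card, Nat.card_eq_fintype_card]
        exact Fintype.card_congr (Equiv.setCongr rfl)
      rw [this]
      have := hMcard M hM
      omega
    have h4 : ∑ M ∈ 𝒞, ((M : Set G).toFinset.erase 1).card ≤ n * (p ^ (k - 1) - 1) := by
      calc ∑ M ∈ 𝒞, ((M : Set G).toFinset.erase 1).card
          ≤ ∑ _M ∈ 𝒞, (p ^ (k - 1) - 1) := Finset.sum_le_sum h3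
        _ = n * (p ^ (k - 1) - 1) := by rw [Finset.sum_const, hcard, smul_eq_mul]
    have h5 : Nat.card G - 1 = (Finset.univ.erase (1 : G)).card := by
      rw [Finset.card_erase_of_mem (Finset.mem_univ 1), Finset.card_univ,
        Nat.card_eq_fintype_card]
    omega
  -- conclude
  by_contra hcon
  push_neg at hcon
  have hnp : n ≤ p := by omega
  have h6 : n * (p ^ (k - 1) - 1) ≤ p * (p ^ (k - 1) - 1) :=
    Nat.mul_le_mul_right _ hnp
  have h7 : p * (p ^ (k - 1) - 1) = p ^ k - p := by
    rw [Nat.mul_sub, mul_one, ← pow_succ']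
    congr 1
    congr 1
    omega
  have h8 : p ≤ p ^ k := Nat.le_self_pow (by omega) p
  rw [hk] at key
  omega
end

section
/- Let p be a prime number, let G be a finite p-group with a 𝔠_n-cover {M_1, …, M_n}, and let s be an integer with 1 ≤ s ≤ n − 2 and p = n − s. Then for every subset S of {1, …, n} with |S| ≥ s + 1, the intersection ⋂_{i ∈ S} M_i is the trivial subgroup. -/
/-- An indexed version: the (pairwise distinct) subgroups `M 1, …, M n` form a `𝔠ₙ`-cover. -/
def IsCCoverFam {G : Type*} [Group G] (n : ℕ) (M : Fin n → Subgroup G) : Prop :=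
  Function.Injective M ∧
    IsCCover n (letI := Classical.decEq (Subgroup G); Finset.univ.image M)

theorem statement_13 (p : ℕ) (hp : p.Prime) {G : Type*} [Group G] [Finite G]
    (hG : IsPGroup p G) (n : ℕ) (M : Fin n → Subgroup G)
    (hM : IsCCoverFam n M)
    (s : ℕ) (hs1 : 1 ≤ s) (hs2 : s ≤ n - 2) (hps : p = n - s)
    (S : Finset (Fin n)) (hS : s + 1 ≤ S.card) :
    (⨅ i ∈ S, M i) = ⊥ := by
  classical
  haveI : Fact p.Prime := ⟨hp⟩
  haveI : Group.IsNilpotent G := hG.isNilpotent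
  obtain ⟨hinj, hcard, hproper, hcover, hirr, hmax, hcore⟩ := hM
  set C : Finset (Subgroup G) :=
    (letI := Classical.decEq (Subgroup G); Finset.univ.image M) with hC
  have hCmem : ∀ N, N ∈ C ↔ ∃ i, M i = N := by
    intro N
    rw [hC]
    constructor
    · intro h
      rcases Finset.mem_image.mp h with ⟨i, _, hi⟩
      exact ⟨i, hi⟩
    · rintro ⟨i, hi⟩
      exact Finset.mem_image.mpr ⟨i, Finset.mem_univ _, hi⟩
  -- every member of C is normal
  have hNormal : ∀ N ∈ C, N.Normal := fun N hN =>
    Subgroup.NormalizerCondition.normal_of_coatom N normalizerCondition_of_isNilpotent (hmax N hN)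
  have hn2 : s + 2 ≤ n := by omega
  have hpn : n = p + s := by omega
  -- key: no element of order p in the intersection
  have key : ∀ x : G, x ∈ (⨅ i ∈ S, M i) → orderOf x = p → False := by
    intro x hxW hxp
    have hxne : x ≠ 1 := by
      intro h
      rw [h, orderOf_one] at hxp
      exact hp.one_lt.ne' hxp.symm
    have hxS : ∀ i ∈ S, x ∈ M i := by
      intro i hi
      exact (Subgroup.mem_iInf.mp hxW i : x ∈ ⨅ _ : i ∈ S, M i) |> fun h =>
        (Subgroup.mem_iInf.mp h) hi
    -- coprime power lemma
    have hpowmem : ∀ (N : Subgroup G) (k : ℕ), 0 < k → k < p → x ^ k ∈ N → x ∈ N := by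
      intro N k hk1 hk2 hxk
      have hnd : ¬ p ∣ k := fun hdvd => absurd (Nat.le_of_dvd hk1 hdvd) (not_le.mpr hk2)
      have hcop : Nat.Coprime k p := (hp.coprime_iff_not_dvd.mpr hnd).symm
      obtain ⟨m, -, hm⟩ := Nat.exists_mul_mod_eq_one_of_coprime hcop hp.one_lt
      have : x = (x ^ k) ^ m := by
        rw [← pow_mul, ← pow_mod_orderOf, hxp, hm, pow_one]
      rw [this]
      exact pow_mem hxk m
    -- there is a member not containing x
    have hExN : ∃ N ∈ C, x ∉ N := by
      by_contra h
      push_neg at h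
      have hmeminf : ∀ z : G, z ∈ C.inf id ↔ ∀ N ∈ C, z ∈ N := by
        intro z
        rw [Finset.inf_eq_iInf]
        simp [Subgroup.mem_iInf]
      have hxinf : x ∈ C.inf id := (hmeminf x).mpr h
      have hNormalInf : (C.inf id).Normal := by
        constructor
        intro y hy g
        rw [hmeminf] at hy ⊢
        intro N hN
        exact (hNormal N hN).conj_mem y (hy N hN) g
      have : C.inf id = ⊥ := by
        rw [← hcore]
        exact (Subgroup.normalCore_eq_self _).symm
      rw [this] at hxinf
      exact hxne hxinf
    obtain ⟨N₀, hN₀C, hN₀x⟩ := hExN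
    -- the members containing x cover G
    set D : Finset (Subgroup G) := C.filter (fun N => x ∈ N) with hD
    have hDcover : ∀ g : G, ∃ N ∈ D, g ∈ N := by
      intro g
      by_contra hgD
      push_neg at hgD
      -- choose for each t a member containing g * x ^ t
      have hchoice : ∀ t : ℕ, ∃ N, N ∈ C ∧ g * x ^ t ∈ N := by
        intro t
        obtain ⟨N, hN, hgN⟩ := hcover (g * x ^ t)
        exact ⟨N, hN, hgN⟩
      choose f hfC hfmem using hchoice
      have hfnx : ∀ t, x ∉ f t := by
        intro t hxf
        have hgf : g ∈ f t := by
          have := mul_mem (hfmem t) (inv_mem (pow_mem hxf t))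
          rwa [mul_assoc, mul_inv_cancel, mul_one] at this
        exact hgD (f t) (Finset.mem_filter.mpr ⟨hfC t, hxf⟩) hgf
      -- f is injective on range p
      have hfinj : Set.InjOn f (Finset.range p) := by
        intro t1 ht1 t2 ht2 hft
        simp only [Finset.coe_range, Set.mem_Iio] at ht1 ht2
        by_contra hne
        rcases Nat.lt_or_ge t1 t2 with hlt | hge
        · have h2 : g * x ^ t2 = (g * x ^ t1) * x ^ (t2 - t1) := by
            rw [mul_assoc, ← pow_add]
            congr 2
            omega
          have hx12 : x ^ (t2 - t1) ∈ f t1 := by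
            have hm2 := hfmem t2
            rw [← hft] at hm2
            have := mul_mem (inv_mem (hfmem t1)) hm2
            rw [h2, ← mul_assoc, inv_mul_cancel, one_mul] at this
            exact this
          exact hfnx t1 (hpowmem _ (t2 - t1) (by omega) (by omega) hx12)
        · have hlt : t2 < t1 := by omega
          have h2 : g * x ^ t1 = (g * x ^ t2) * x ^ (t1 - t2) := by
            rw [mul_assoc, ← pow_add]
            congr 2
            omega
          have hx12 : x ^ (t1 - t2) ∈ f t2 := by
            have hm1' := hfmem t1
            rw [hft] at hm1'
            have := mul_mem (inv_mem (hfmem t2)) hm1'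
            rw [h2, ← mul_assoc, inv_mul_cancel, one_mul] at this
            exact this
          exact hfnx t2 (hpowmem _ (t1 - t2) (by omega) (by omega) hx12)
      -- so there are at least p members not containing x
      have hmaps : ∀ t ∈ Finset.range p, f t ∈ C.filter (fun N => x ∉ N) := by
        intro t _
        exact Finset.mem_filter.mpr ⟨hfC t, hfnx t⟩
      have hple : p ≤ (C.filter (fun N => x ∉ N)).card := by
        have := Finset.card_le_card_of_injOn f hmaps hfinj
        simpa using this
      -- but S gives at least s + 1 members containing x
      have hsub : S.image M ⊆ D := by
        intro N hN
        rcases Finset.mem_image.mp hN with ⟨i, hiS, hiN⟩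
        refine Finset.mem_filter.mpr ⟨(hCmem N).mpr ⟨i, hiN⟩, ?_⟩
        rw [← hiN]
        exact hxS i hiS
      have hDcard : s + 1 ≤ D.card := by
        calc s + 1 ≤ S.card := hS
        _ = (S.image M).card := (Finset.card_image_of_injective S hinj).symm
        _ ≤ D.card := Finset.card_le_card hsub
      have hsum : D.card + (C.filter (fun N => x ∉ N)).card = n := by
        rw [hD, Finset.card_filter_add_card_filter_not, hcard]
      omega
    -- D is a proper subset of C, contradicting irredundancy
    have hDssub : D ⊂ C := by
      constructor
      · exact Finset.filter_subset _ _
      · intro hCD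
        exact hN₀x (Finset.mem_filter.mp (hCD hN₀C)).2
    obtain ⟨g, hg⟩ := hirr D hDssub
    obtain ⟨N, hN, hgN⟩ := hDcover g
    exact hg N hN hgN
  -- conclude
  rw [eq_bot_iff]
  intro y hy
  rw [Subgroup.mem_bot]
  by_contra hyne
  obtain ⟨k, hk⟩ := hG y
  have hyd : orderOf y ∣ p ^ k := orderOf_dvd_of_pow_eq_one hk
  obtain ⟨m, hm, hmy⟩ := (Nat.dvd_prime_pow hp).mp hyd
  have hm1 : 1 ≤ m := by
    by_contra h
    have : m = 0 := by omega
    rw [this, pow_zero] at hmy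
    exact hyne (orderOf_eq_one_iff.mp hmy)
  have hyW : ∀ t : ℕ, y ^ t ∈ (⨅ i ∈ S, M i) := fun t => pow_mem hy t
  refine key (y ^ p ^ (m - 1)) (hyW _) ?_
  have hord : orderOf (y ^ p ^ (m - 1)) = orderOf y / Nat.gcd (orderOf y) (p ^ (m - 1)) :=
    orderOf_pow y
  rw [hord, hmy, Nat.gcd_eq_right (pow_dvd_pow p (by omega)),
    Nat.pow_div (by omega) hp.pos, show m - (m - 1) = 1 by omega, pow_one]
end

section
/- Let p be a prime number and let G be a finite p-group admitting a 𝔠_{p+1}-cover. Then G is isomorphic to (C_p)^2. -/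
open Subgroup

lemma aux_index_eq {p : ℕ} (hp : p.Prime) {G : Type*} [Group G] [Finite G]
    (hG : IsPGroup p G) {M : Subgroup G} [M.Normal] (hM : IsCoatom M) : M.index = p := by
  haveI : Fact p.Prime := ⟨hp⟩
  have hQp : IsPGroup p (G ⧸ M) := hG.to_quotient M
  obtain ⟨g, hg⟩ := not_forall.mp (fun h => hM.1 ((Subgroup.eq_top_iff' M).mpr h))
  haveI : Nontrivial (G ⧸ M) :=
    ⟨(g : G ⧸ M), 1, by simpa [QuotientGroup.eq_one_iff] using hg⟩
  obtain ⟨n, hn⟩ := hQp.exists_card_eq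
  have hn1 : n ≠ 0 := by
    rintro rfl
    have h2 : (1:ℕ) < Nat.card (G ⧸ M) := Finite.one_lt_card
    simp at hn
    omega
  obtain ⟨q, hq⟩ := exists_prime_orderOf_dvd_card' (G := G ⧸ M) p
    (by rw [hn]; exact dvd_pow_self p hn1)
  have hsur : Function.Surjective (QuotientGroup.mk' M) := Quot.mk_surjective
  have hz : Subgroup.zpowers q = ⊤ := by
    have hle : M ≤ Subgroup.comap (QuotientGroup.mk' M) (Subgroup.zpowers q) := by
      intro x hx
      have : (QuotientGroup.mk' M) x = 1 := by
        simpa [QuotientGroup.eq_one_iff] using hx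
      simp only [Subgroup.mem_comap, this]
      exact one_mem _
    rcases eq_or_lt_of_le hle with heq | hlt
    · exfalso
      have h1 : Subgroup.zpowers q =
          Subgroup.map (QuotientGroup.mk' M) (Subgroup.comap (QuotientGroup.mk' M) (Subgroup.zpowers q)) :=
        (Subgroup.map_comap_eq_self_of_surjective hsur _).symm
      rw [← heq] at h1
      have h2 : Subgroup.map (QuotientGroup.mk' M) M = ⊥ :=
        (Subgroup.map_eq_bot_iff _).mpr (le_of_eq (QuotientGroup.ker_mk' M).symm)
      rw [h2] at h1
      have : q = 1 := by
        have : q ∈ (⊥ : Subgroup (G ⧸ M)) := h1 ▸ Subgroup.mem_zpowers q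
        simpa using this
      rw [this] at hq
      simp at hq
      exact hp.one_lt.ne' hq.symm
    · have := hM.2 _ hlt
      have h1 : Subgroup.zpowers q =
          Subgroup.map (QuotientGroup.mk' M) (Subgroup.comap (QuotientGroup.mk' M) (Subgroup.zpowers q)) :=
        (Subgroup.map_comap_eq_self_of_surjective hsur _).symm
      rw [this] at h1
      rw [h1]
      exact Subgroup.map_top_of_surjective _ hsur
  rw [Subgroup.index_eq_card, ← Subgroup.card_top (G := G ⧸ M), ← hz, Nat.card_zpowers, hq]


theorem statement_14 (p : ℕ) (hp : p.Prime) {G : Type*} [Group G] [Finite G]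
    (hG : IsPGroup p G)
    (hcov : ∃ 𝒞 : Finset (Subgroup G), IsCCover (p + 1) 𝒞) :
    Nonempty (G ≃* (Fin 2 → Multiplicative (ZMod p))) := by
  classical
  obtain ⟨𝒞, hcard, hntop, hcov, hirr, hmax, hcore⟩ := hcov
  haveI : Fact p.Prime := ⟨hp⟩
  letI := Fintype.ofFinite G
  haveI hnil : Group.IsNilpotent G := hG.isNilpotent
  have hnorm : ∀ M ∈ 𝒞, (M : Subgroup G).Normal := fun M hM =>
    Subgroup.NormalizerCondition.normal_of_coatom M normalizerCondition_of_isNilpotent (hmax M hM)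
  set n := Nat.card G with hn
  have hidx : ∀ M ∈ 𝒞, M.index = p := fun M hM =>
    letI := hnorm M hM; aux_index_eq hp hG (hmax M hM)
  have ha : ∀ M ∈ 𝒞, Nat.card M * p = n := by
    intro M hM
    rw [← hidx M hM]
    exact M.card_mul_index
  -- coatoms: M ≤ L → M = L
  have hle_eq : ∀ M ∈ 𝒞, ∀ L ∈ 𝒞, M ≤ L → M = L := by
    intro M hM L hL h
    by_contra hne
    exact (hmax L hL).1 ((hmax M hM).2 L (lt_of_le_of_ne h hne))
  have hb : ∀ M ∈ 𝒞, ∀ L ∈ 𝒞, M ≠ L → Nat.card (M ⊓ L : Subgroup G) * (p * p) = n := by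
    intro M hM L hL hne
    haveI := hnorm L hL
    have hrel : L.relIndex M = p := by
      rcases hp.eq_one_or_self_of_dvd _ ((hidx L hL) ▸ L.relIndex_dvd_index_of_normal M) with h | h
      · exact absurd (hle_eq M hM L hL (Subgroup.relIndex_eq_one.mp h)) hne
      · exact h
    have h1 : (M ⊓ L).relIndex M = p := by
      rw [inf_comm, Subgroup.inf_relIndex_right, hrel]
    have h2 : (M ⊓ L).index = p * p := by
      rw [← Subgroup.relIndex_mul_index (inf_le_left : M ⊓ L ≤ M), h1, hidx M hM]
    rw [← h2]
    exact (M ⊓ L).card_mul_index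
  -- cardinalities are constant across the cover
  -- key disjointness
  have key : ∀ L ∈ 𝒞, ∀ M ∈ 𝒞, ∀ N ∈ 𝒞, M ≠ N → M ≠ L → N ≠ L →
      ∀ x : G, x ∈ M → x ∈ N → x ∈ L := by
    intro L hL M hM N hN hMN hML hNL x hxM hxN
    by_contra hxL
    set a := Nat.card M with hadef
    set b := Nat.card (M ⊓ L : Subgroup G) with hbdef
    have haK : ∀ K ∈ 𝒞, Nat.card K = a := by
      intro K hK
      exact Nat.eq_of_mul_eq_mul_right hp.pos ((ha K hK).trans (ha M hM).symm)
    have hbK : ∀ K ∈ 𝒞.erase L, Nat.card (K ⊓ L : Subgroup G) = b := by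
      intro K hK
      obtain ⟨hKL, hK𝒞⟩ := Finset.mem_erase.mp hK
      exact Nat.eq_of_mul_eq_mul_right (Nat.mul_pos hp.pos hp.pos)
        ((hb K hK𝒞 L hL hKL).trans (hb M hM L hL hML).symm)
    have hbp : b * p = a := by
      refine Nat.eq_of_mul_eq_mul_right hp.pos ?_
      rw [mul_assoc]
      rw [hb M hM L hL hML, ha M hM]
    have hba : b ≤ a := hbp ▸ Nat.le_mul_of_pos_right b hp.pos
    -- finsets
    set fL : Finset G := (L : Set G).toFinset with hfL
    set S : Subgroup G → Finset G := fun K => (K : Set G).toFinset \ fL with hS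
    have cardT : ∀ K : Subgroup G, (K : Set G).toFinset.card = Nat.card K := by
      intro K
      rw [Set.toFinset_card, ← Nat.card_eq_fintype_card]
      rfl
    have cardS : ∀ K ∈ 𝒞.erase L, (S K).card = a - b := by
      intro K hK
      obtain ⟨hKL, hK𝒞⟩ := Finset.mem_erase.mp hK
      have hsub : (K : Set G).toFinset ∩ fL = ((K ⊓ L : Subgroup G) : Set G).toFinset := by
        ext g
        simp [hfL, Set.mem_toFinset, Subgroup.mem_inf]
      have h1 := Finset.card_sdiff_add_card_inter ((K : Set G).toFinset) fL
      rw [hsub, cardT] at h1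
      have h2 := cardT K
      have := hbK K hK
      have h4 := haK K hK𝒞
      show ((K : Set G).toFinset \ fL).card = a - b
      omega
    -- main counting
    have hcovF : (Finset.univ : Finset G) ⊆ fL ∪ (𝒞.erase L).biUnion S := by
      intro g _
      obtain ⟨K, hK, hgK⟩ := hcov g
      by_cases hgL : g ∈ L
      · exact Finset.mem_union_left _ (by simp [hfL, Set.mem_toFinset, hgL])
      · refine Finset.mem_union_right _ (Finset.mem_biUnion.mpr ⟨K, ?_, ?_⟩)
        · exact Finset.mem_erase.mpr ⟨fun h => hgL (h ▸ hgK), hK⟩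
        · simp [hS, hfL, Set.mem_toFinset, hgK, hgL]
    have hxS : x ∈ S M := by simp [hS, hfL, Set.mem_toFinset, hxM, hxL]
    have hsub2 : (𝒞.erase L).biUnion S ⊆ (S M).erase x ∪ ((𝒞.erase L).erase M).biUnion S := by
      intro g hg
      obtain ⟨K, hK, hgK⟩ := Finset.mem_biUnion.mp hg
      by_cases hKM : K = M
      · subst hKM
        by_cases hgx : g = x
        · subst hgx
          refine Finset.mem_union_right _ (Finset.mem_biUnion.mpr ⟨N, ?_, ?_⟩)
          · exact Finset.mem_erase.mpr ⟨fun h => hMN h.symm,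
              Finset.mem_erase.mpr ⟨hNL, hN⟩⟩
          · simp [hS, hfL, Set.mem_toFinset, hxN, hxL]
        · exact Finset.mem_union_left _ (Finset.mem_erase.mpr ⟨hgx, hgK⟩)
      · exact Finset.mem_union_right _
          (Finset.mem_biUnion.mpr ⟨K, Finset.mem_erase.mpr ⟨hKM, hK⟩, hgK⟩)
    have hMe : M ∈ 𝒞.erase L := Finset.mem_erase.mpr ⟨hML, hM⟩
    have hcard2 : ((𝒞.erase L).erase M).card = p - 1 := by
      rw [Finset.card_erase_of_mem hMe, Finset.card_erase_of_mem hL, hcard]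
      omega
    have hSM : (S M).card = a - b := cardS M hMe
    have hpos : 0 < (S M).card := Finset.card_pos.mpr ⟨x, hxS⟩
    have hsum : ∑ K ∈ (𝒞.erase L).erase M, (S K).card = (p - 1) * (a - b) := by
      rw [Finset.sum_congr rfl (fun K hK => cardS K (Finset.mem_of_mem_erase hK)),
        Finset.sum_const, hcard2, smul_eq_mul]
    have hbound : n ≤ Nat.card L + ((a - b - 1) + (p - 1) * (a - b)) := by
      calc n = (Finset.univ : Finset G).card := by
              rw [Finset.card_univ]; exact Nat.card_eq_fintype_card
        _ ≤ (fL ∪ (𝒞.erase L).biUnion S).card := Finset.card_le_card hcovF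
        _ ≤ fL.card + ((𝒞.erase L).biUnion S).card := Finset.card_union_le _ _
        _ ≤ fL.card + ((S M).erase x ∪ ((𝒞.erase L).erase M).biUnion S).card :=
              Nat.add_le_add_left (Finset.card_le_card hsub2) _
        _ ≤ fL.card + (((S M).erase x).card + (((𝒞.erase L).erase M).biUnion S).card) :=
              Nat.add_le_add_left (Finset.card_union_le _ _) _
        _ ≤ fL.card + (((S M).erase x).card + ∑ K ∈ (𝒞.erase L).erase M, (S K).card) :=
              Nat.add_le_add_left (Nat.add_le_add_left (Finset.card_biUnion_le) _) _
        _ = Nat.card L + ((a - b - 1) + (p - 1) * (a - b)) := by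
              rw [cardT L, Finset.card_erase_of_mem hxS, hSM, hsum]
    have hLa : Nat.card L = a := haK L hL
    have h8 : b + (a - b) = a := Nat.add_sub_cancel' hba
    have h9 : p * b + p * (a - b) = p * a := by rw [← Nat.mul_add, h8]
    have h10 : p * b = a := by rw [mul_comm]; exact hbp
    have h11 : p * a = n := by rw [mul_comm]; exact ha M hM
    have h12 : (p - 1) * (a - b) = p * (a - b) - (a - b) := Nat.sub_one_mul p (a - b)
    have h13 : a - b ≤ p * (a - b) := Nat.le_mul_of_pos_left _ hp.pos
    generalize hq1 : p * (a - b) = m at h9 h12 h13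
    generalize hq2 : (p - 1) * (a - b) = m2 at h12 hbound
    generalize hq3 : p * b = m3 at h9 h10
    generalize hq4 : p * a = m4 at h9 h11
    omega
  -- two distinct members
  obtain ⟨M, hM, N, hN, hMN⟩ := Finset.one_lt_card.mp
    (show 1 < 𝒞.card by rw [hcard]; have := hp.two_le; omega)
  have hinf : M ⊓ N ≤ 𝒞.inf id := by
    refine Finset.le_inf fun L hL => ?_
    show M ⊓ N ≤ L
    intro x hx
    rcases eq_or_ne M L with rfl | hML
    · exact hx.1
    rcases eq_or_ne N L with rfl | hNL
    · exact hx.2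
    · exact key L hL M hM N hN hMN hML hNL x hx.1 hx.2
  haveI := hnorm M hM
  haveI := hnorm N hN
  have hMNbot : M ⊓ N = ⊥ :=
    le_bot_iff.mp (hcore ▸ Subgroup.normal_le_normalCore.mpr hinf)
  have hn2 : n = p * p := by
    have h := hb M hM N hN hMN
    rw [hMNbot, Subgroup.card_bot, one_mul] at h
    exact h.symm
  -- exponent p
  have hexp : ∀ g : G, g ^ p = 1 := by
    intro g
    obtain ⟨K, hK, hgK⟩ := hcov g
    have hKc : Nat.card K = p := by
      have h := ha K hK
      rw [hn2] at h
      exact Nat.eq_of_mul_eq_mul_right hp.pos h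
    have h1 : (⟨g, hgK⟩ : K) ^ p = 1 := by rw [← hKc]; exact pow_card_eq_one'
    simpa using congrArg (Subgroup.subtype K) h1
  -- commutative
  have hcomm : ∀ a b : G, a * b = b * a :=
    IsPGroup.commutative_of_card_eq_prime_sq (by rw [← hn, hn2, sq])
  letI : CommGroup G := { ‹Group G› with mul_comm := hcomm }
  haveI : NeZero p := ⟨hp.ne_zero⟩
  letI : Module (ZMod p) (Additive G) := AddCommGroup.zmodModule (by
    intro x
    have h : Additive.toMul (p • x) = Additive.toMul (0 : Additive G) := by
      rw [toMul_nsmul, toMul_zero]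
      exact hexp _
    exact Additive.toMul.injective h)
  haveI : Finite (Additive G) := ‹Finite G›
  haveI inst1 : Module.Finite (ZMod p) (Additive G) := Module.Finite.of_finite (R := ZMod p)
  haveI inst2 : Module.Free (ZMod p) (Additive G) := Module.Free.of_divisionRing (ZMod p) (Additive G)
  letI : Fintype (Additive G) := Fintype.ofFinite _
  have hfr : Module.finrank (ZMod p) (Additive G) = 2 := by
    have hcV : Fintype.card (Additive G) =
        Fintype.card (ZMod p) ^ Module.finrank (ZMod p) (Additive G) :=
      Module.card_eq_pow_finrank
    rw [ZMod.card] at hcV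
    have hcG : Fintype.card (Additive G) = p ^ 2 := by
      rw [← Nat.card_eq_fintype_card, Nat.card_congr Additive.toMul, ← hn, hn2, sq]
    have h2 : p ^ 2 = p ^ Module.finrank (ZMod p) (Additive G) := by rw [← hcV, hcG]
    exact (Nat.pow_right_injective hp.two_le h2).symm
  let bas : Module.Basis (Fin 2) (ZMod p) (Additive G) :=
    @Module.finBasisOfFinrankEq (ZMod p) (Additive G) _ _ _ inst2 _ inst1 _ hfr
  let e1 : Additive G ≃ₗ[ZMod p] (Fin 2 → ZMod p) := bas.equivFun
  exact ⟨(MulEquiv.multiplicativeAdditive G).symm.trans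
    ((AddEquiv.toMultiplicative e1.toAddEquiv).trans
      (MulEquiv.piMultiplicative fun _ : Fin 2 => ZMod p))⟩
end

section
/- Let p be a prime number, let d ≥ 2 be an integer, and suppose G = (C_p)^d has a 𝔠_n-cover {M_1, …, M_n}. Then for every subset T of {1, …, n} with |T| = n − p, the order of the intersection ⋂_{i ∈ T} M_i is either 1 or p. -/
/-- If `H < K` are subgroups of a group whose subgroup cards divide `p ^ d`,
then `p * |H| ≤ |K|`. -/
lemma aux_mul_card_le {G : Type*} [Group G] [Finite G] {p d : ℕ} (hp : p.Prime)
    (hG : Nat.card G = p ^ d) {H K : Subgroup G} (hle : H ≤ K) (hne : H ≠ K) :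
    p * Nat.card H ≤ Nat.card K := by
  obtain ⟨m, hm⟩ := Subgroup.card_dvd_of_le hle
  have hKdvd : Nat.card K ∣ p ^ d := hG ▸ Subgroup.card_subgroup_dvd_card K
  have hKpos : 0 < Nat.card K := Nat.card_pos
  have hm0 : m ≠ 0 := by rintro rfl; simp [hm] at hKpos
  have hm1 : m ≠ 1 := by
    rintro rfl
    exact hne (Subgroup.eq_of_le_of_card_ge hle (by rw [hm, mul_one]))
  have hmdvd : m ∣ p ^ d := dvd_trans ⟨Nat.card H, by rw [hm, mul_comm]⟩ hKdvd
  obtain ⟨k, hk, rfl⟩ := (Nat.dvd_prime_pow hp).1 hmdvd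
  have hk0 : k ≠ 0 := by rintro rfl; simp at hm1
  have hple : p ≤ p ^ k := by
    calc p = p ^ 1 := (pow_one p).symm
    _ ≤ p ^ k := Nat.pow_le_pow_right hp.pos (by omega)
  calc p * Nat.card H ≤ p ^ k * Nat.card H := Nat.mul_le_mul_right _ hple
  _ = Nat.card K := by rw [hm, mul_comm]

/-- If two of the members of a finite family of finsets overlap, the cardinality of the
union is strictly less than the sum of the cardinalities. -/
lemma aux_biUnion_lt {ι γ : Type*} [DecidableEq ι] [DecidableEq γ] {S : Finset ι}
    {B : ι → Finset γ} {i k : ι} (hi : i ∈ S) (hk : k ∈ S) (hik : i ≠ k) {x : γ}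
    (hxi : x ∈ B i) (hxk : x ∈ B k) :
    (S.biUnion B).card < ∑ l ∈ S, (B l).card := by
  have h1 : S.biUnion B = B i ∪ (S.erase i).biUnion B := by
    conv_lhs => rw [← Finset.insert_erase hi]
    rw [Finset.biUnion_insert]
  have hkx : x ∈ (S.erase i).biUnion B :=
    Finset.mem_biUnion.2 ⟨k, Finset.mem_erase.2 ⟨fun h => hik h.symm, hk⟩, hxk⟩
  have h5 : 0 < (B i ∩ (S.erase i).biUnion B).card :=
    Finset.card_pos.2 ⟨x, Finset.mem_inter.2 ⟨hxi, hkx⟩⟩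
  have h3 := Finset.card_union_add_card_inter (B i) ((S.erase i).biUnion B)
  have h4 := Finset.card_biUnion_le (s := S.erase i) (t := B)
  have h6 : ∑ l ∈ S.erase i, (B l).card + (B i).card = ∑ l ∈ S, (B l).card :=
    Finset.sum_erase_add S _ hi
  rw [h1]
  omega

theorem statement_15 (p : ℕ) (hp : p.Prime) (d : ℕ) (hd : 2 ≤ d) (n : ℕ)
    (M : Fin n → Subgroup (Fin d → Multiplicative (ZMod p)))
    (hM : IsCCoverFam n M)
    (T : Finset (Fin n)) (hT : T.card = n - p) :
    Nat.card ↥(⨅ i ∈ T, M i) = 1 ∨ Nat.card ↥(⨅ i ∈ T, M i) = p := by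
  classical
  haveI : Fact p.Prime := ⟨hp⟩
  set G := (Fin d → Multiplicative (ZMod p)) with hGdef
  obtain ⟨hinj, hC⟩ := hM
  obtain ⟨𝒞, hmemC, hC⟩ :
      ∃ 𝒞 : Finset (Subgroup G), (∀ N : Subgroup G, N ∈ 𝒞 ↔ ∃ i, M i = N) ∧ IsCCover n 𝒞 :=
    ⟨_, fun N => by
      letI := Classical.decEq (Subgroup G)
      simp [Finset.mem_image], hC⟩
  obtain ⟨-, hproper, hcover, hirr, -, hcore⟩ := hC
  have hcardG : Nat.card G = p ^ d := by
    simp [hGdef, Nat.card_pi, Nat.card_eq_fintype_card, ZMod.card]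
  -- basic consequences of the cover properties
  have cover : ∀ a : G, ∃ i, a ∈ M i := by
    intro a
    obtain ⟨N, hN, haN⟩ := hcover a
    obtain ⟨i, rfl⟩ := (hmemC N).1 hN
    exact ⟨i, haN⟩
  have hbot : ∀ H : Subgroup G, (∀ i, H ≤ M i) → H = ⊥ := by
    intro H hH
    have h1 : H ≤ 𝒞.inf id := Finset.le_inf fun N hN => by
      obtain ⟨i, rfl⟩ := (hmemC N).1 hN; exact hH i
    have h2 : (𝒞.inf id).normalCore = 𝒞.inf id := Subgroup.normalCore_eq_self _
    have h3 : 𝒞.inf id = ⊥ := h2.symm.trans hcore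
    rw [h3] at h1
    exact le_bot_iff.1 h1
  have hpriv : ∀ j : Fin n, ∃ g : G, g ∈ M j ∧ ∀ i, i ≠ j → g ∉ M i := by
    intro j
    have hmem : M j ∈ 𝒞 := (hmemC _).2 ⟨j, rfl⟩
    obtain ⟨g, hg⟩ := hirr (𝒞.erase (M j)) (Finset.erase_ssubset hmem)
    obtain ⟨N, hN, hgN⟩ := hcover g
    have hNj : N = M j := by
      by_contra hne
      exact hg N (Finset.mem_erase.2 ⟨hne, hN⟩) hgN
    refine ⟨g, hNj ▸ hgN, fun i hij => hg (M i) (Finset.mem_erase.2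
      ⟨fun h => hij (hinj h), (hmemC _).2 ⟨i, rfl⟩⟩)⟩
  -- the intersection W
  set W : Subgroup G := ⨅ i ∈ T, M i with hWdef
  have hWM : ∀ i ∈ T, W ≤ M i := fun i hi => iInf₂_le i hi
  have hWdvd : Nat.card W ∣ p ^ d := hcardG ▸ Subgroup.card_subgroup_dvd_card W
  suffices h : Nat.card W ≤ p by
    obtain ⟨k, hk, hkeq⟩ := (Nat.dvd_prime_pow hp).1 hWdvd
    have hk1 : k ≤ 1 := by
      by_contra hk1
      have h2 : p ^ 2 ≤ p ^ k := Nat.pow_le_pow_right hp.pos (by omega)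
      have h3 : p * p ≤ p := by
        calc p * p = p ^ 2 := (sq p).symm
        _ ≤ p ^ k := h2
        _ = Nat.card W := hkeq.symm
        _ ≤ p := h
      nlinarith [hp.two_le]
    interval_cases k
    · left; simpa using hkeq
    · right; simpa using hkeq
  by_contra hgt
  push_neg at hgt
  have hWpos : 0 < Nat.card W := Nat.card_pos
  -- choose j outside T with W not contained in M j
  have hWne : W ≠ ⊥ := by
    intro h
    rw [h, Subgroup.card_bot] at hgt
    have := hp.two_le
    omega
  obtain ⟨j, hjT, hjW⟩ : ∃ j, j ∉ T ∧ ¬ W ≤ M j := by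
    by_contra h
    push_neg at h
    exact hWne (hbot W fun i => by
      by_cases hi : i ∈ T
      · exact hWM i hi
      · exact h i hi)
  obtain ⟨g, hgj, hgpriv⟩ := hpriv j
  -- the coset machinery
  have coset : ∀ (a : G) (H : Subgroup G),
      ((Finset.univ.filter (· ∈ H)).image (fun w => a * w)).card = Nat.card H ∧
      ∀ b : G, b ∈ (Finset.univ.filter (· ∈ H)).image (fun w => a * w) ↔ a⁻¹ * b ∈ H := by
    intro a H
    constructor
    · rw [Finset.card_image_of_injective _ (mul_right_injective a), Nat.card_eq_fintype_card]
      simp [Fintype.card_subtype]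
    · intro b
      simp only [Finset.mem_image, Finset.mem_filter, Finset.mem_univ, true_and]
      constructor
      · rintro ⟨w, hw, rfl⟩; rw [inv_mul_cancel_left]; exact hw
      · intro hb; exact ⟨a⁻¹ * b, hb, by rw [mul_inv_cancel_left]⟩
  set S : Finset (Fin n) := Tᶜ with hSdef
  have hjS : j ∈ S := Finset.mem_compl.2 hjT
  set A : Finset G := (Finset.univ.filter (· ∈ W)).image (fun w => g * w) with hAdef
  have hAmem : ∀ b : G, b ∈ A ↔ g⁻¹ * b ∈ W := (coset g W).2
  have hAcard : A.card = Nat.card W := (coset g W).1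
  set B : Fin n → Finset G := fun i => A.filter (· ∈ M i) with hBdef
  have hBsubA : ∀ i, B i ⊆ A := fun i => Finset.filter_subset _ _
  -- an element of some B i with i ∈ S forces g itself into M i unless W ≰ M i
  have hgin : ∀ i : Fin n, ∀ a : G, a ∈ B i → W ≤ M i → g ∈ M i := by
    intro i a ha hle
    have h1 : g⁻¹ * a ∈ W := (hAmem a).1 (hBsubA i ha)
    have h2 : a ∈ M i := (Finset.mem_filter.1 ha).2
    have : a * (g⁻¹ * a)⁻¹ ∈ M i := (M i).mul_mem h2 ((M i).inv_mem (hle h1))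
    rwa [mul_inv_rev, inv_inv, mul_inv_cancel_left] at this
  -- A is covered by the B i, i ∈ S
  have hcoverA : A ⊆ S.biUnion B := by
    intro a ha
    obtain ⟨k, hk⟩ := cover a
    have hkT : k ∉ T := by
      intro hkT
      have hgk : g ∈ M k := by
        have h1 : g⁻¹ * a ∈ W := (hAmem a).1 ha
        have : a * (g⁻¹ * a)⁻¹ ∈ M k := (M k).mul_mem hk ((M k).inv_mem (hWM k hkT h1))
        rwa [mul_inv_rev, inv_inv, mul_inv_cancel_left] at this
      exact hgpriv k (fun h => hjT (h ▸ hkT)) hgk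
    exact Finset.mem_biUnion.2 ⟨k, Finset.mem_compl.2 hkT, Finset.mem_filter.2 ⟨ha, hk⟩⟩
  -- each B i (i ∈ S) misses a p-th of W
  have hnotle : ∀ i ∈ S, ∀ a ∈ B i, ¬ W ≤ M i := by
    intro i hi a ha hle
    have hgk := hgin i a ha hle
    by_cases hij : i = j
    · exact hjW (hij ▸ hle)
    · exact hgpriv i hij hgk
  have hBsubcoset : ∀ i, ∀ a ∈ B i,
      B i ⊆ (Finset.univ.filter (· ∈ (M i ⊓ W))).image (fun w => a * w) := by
    intro i a ha b hb
    refine ((coset a (M i ⊓ W)).2 b).2 ?_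
    have h1 : a⁻¹ * b ∈ M i :=
      (M i).mul_mem ((M i).inv_mem (Finset.mem_filter.1 ha).2) (Finset.mem_filter.1 hb).2
    have h2 : a⁻¹ * b ∈ W := by
      have hga : g⁻¹ * a ∈ W := (hAmem a).1 (hBsubA i ha)
      have hgb : g⁻¹ * b ∈ W := (hAmem b).1 (hBsubA i hb)
      have : (g⁻¹ * a)⁻¹ * (g⁻¹ * b) ∈ W := W.mul_mem (W.inv_mem hga) hgb
      rwa [mul_inv_rev, inv_inv, mul_assoc, mul_inv_cancel_left] at this
    exact ⟨h1, h2⟩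
  have hBle : ∀ i ∈ S, p * (B i).card ≤ Nat.card W := by
    intro i hi
    rcases (B i).eq_empty_or_nonempty with h | ⟨a, ha⟩
    · simp [h]
    · have hWi : M i ⊓ W ≠ W := by
        intro h
        exact hnotle i hi a ha (by rw [← h]; exact inf_le_left)
      have h1 : (B i).card ≤ Nat.card ↥(M i ⊓ W) := by
        calc (B i).card ≤ _ := Finset.card_le_card (hBsubcoset i a ha)
        _ = Nat.card ↥(M i ⊓ W) := (coset a (M i ⊓ W)).1
      calc p * (B i).card ≤ p * Nat.card ↥(M i ⊓ W) := Nat.mul_le_mul_left p h1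
      _ ≤ Nat.card W := aux_mul_card_le hp hcardG inf_le_right hWi
  -- counting
  have hsum : Nat.card W ≤ ∑ i ∈ S, (B i).card := by
    calc Nat.card W = A.card := hAcard.symm
    _ ≤ (S.biUnion B).card := Finset.card_le_card hcoverA
    _ ≤ ∑ i ∈ S, (B i).card := Finset.card_biUnion_le
  have hple : p ≤ S.card := by
    have h1 : p * Nat.card W ≤ S.card * Nat.card W := by
      calc p * Nat.card W ≤ p * ∑ i ∈ S, (B i).card := Nat.mul_le_mul_left p hsum
      _ = ∑ i ∈ S, p * (B i).card := Finset.mul_sum _ _ _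
      _ ≤ ∑ _i ∈ S, Nat.card W := Finset.sum_le_sum hBle
      _ = S.card * Nat.card W := by rw [Finset.sum_const, smul_eq_mul]
    exact Nat.le_of_mul_le_mul_right h1 hWpos
  have hScard : S.card = p := by
    have : S.card = n - T.card := by
      rw [hSdef, Finset.card_compl, Fintype.card_fin]
    omega
  -- each B i has exactly |W| / p elements
  obtain ⟨q, hq⟩ : ∃ q, p = q + 1 := ⟨p - 1, by have := hp.pos; omega⟩
  have hBeq : ∀ i ∈ S, p * (B i).card = Nat.card W := by
    intro k hk
    refine le_antisymm (hBle k hk) ?_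
    have h3 : ∑ i ∈ S, p * (B i).card = p * (B k).card + ∑ i ∈ S.erase k, p * (B i).card :=
      (Finset.add_sum_erase S (fun i => p * (B i).card) hk).symm
    have h4 : ∑ i ∈ S.erase k, p * (B i).card ≤ q * Nat.card W := by
      calc ∑ i ∈ S.erase k, p * (B i).card ≤ ∑ _i ∈ S.erase k, Nat.card W :=
        Finset.sum_le_sum fun i hi => hBle i (Finset.mem_of_mem_erase hi)
      _ = (S.erase k).card * Nat.card W := by rw [Finset.sum_const, smul_eq_mul]
      _ = q * Nat.card W := by
        have hq' : (S.erase k).card = q := by rw [Finset.card_erase_of_mem hk, hScard]; omega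
        rw [hq']
    have h2 : p * Nat.card W ≤ ∑ i ∈ S, p * (B i).card := by
      rw [← Finset.mul_sum]; exact Nat.mul_le_mul_left p hsum
    have h5 : p * Nat.card W = Nat.card W + q * Nat.card W := by
      have hx : ∀ x : ℕ, p * x = x + q * x := fun x => by rw [hq]; ring
      exact hx _
    omega
  have hBcoset : ∀ i ∈ S, ∃ a : G, a ∈ B i ∧
      B i = (Finset.univ.filter (· ∈ (M i ⊓ W))).image (fun w => a * w) ∧
      p * Nat.card ↥(M i ⊓ W) = Nat.card W := by
    intro i hi
    have hBpos : 0 < (B i).card := by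
      have h0 := hBeq i hi
      rcases Nat.eq_zero_or_pos (B i).card with hz | hz
      · rw [hz, Nat.mul_zero] at h0; omega
      · exact hz
    obtain ⟨a, ha⟩ := Finset.card_pos.1 hBpos
    have hWi : M i ⊓ W ≠ W := by
      intro h
      exact hnotle i hi a ha (by rw [← h]; exact inf_le_left)
    have h1 : (B i).card ≤ Nat.card ↥(M i ⊓ W) := by
      calc (B i).card ≤ _ := Finset.card_le_card (hBsubcoset i a ha)
      _ = Nat.card ↥(M i ⊓ W) := (coset a (M i ⊓ W)).1
    have h2 : p * Nat.card ↥(M i ⊓ W) ≤ Nat.card W := aux_mul_card_le hp hcardG inf_le_right hWi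
    have h3 : p * Nat.card ↥(M i ⊓ W) = Nat.card W := by
      refine le_antisymm h2 ?_
      calc Nat.card W = p * (B i).card := (hBeq i hi).symm
      _ ≤ p * Nat.card ↥(M i ⊓ W) := Nat.mul_le_mul_left p h1
    have h4 : Nat.card ↥(M i ⊓ W) ≤ (B i).card :=
      le_of_eq (Nat.eq_of_mul_eq_mul_left hp.pos (h3.trans (hBeq i hi).symm))
    refine ⟨a, ha, ?_, h3⟩
    refine Finset.eq_of_subset_of_card_le (hBsubcoset i a ha) ?_
    rw [(coset a (M i ⊓ W)).1]
    exact h4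
  -- the intersections M i ⊓ W, i ∈ S, coincide pairwise
  have hWieq : ∀ i ∈ S, ∀ k ∈ S, M i ⊓ W = M k ⊓ W := by
    intro i hi k hk
    by_contra hne
    have hik : i ≠ k := fun h => hne (h ▸ rfl)
    obtain ⟨a, haB, hBa, hpa⟩ := hBcoset i hi
    obtain ⟨b, hbB, hBb, hpb⟩ := hBcoset k hk
    have hcardik : Nat.card ↥(M i ⊓ W) = Nat.card ↥(M k ⊓ W) :=
      Nat.eq_of_mul_eq_mul_left hp.pos (hpa.trans hpb.symm)
    have hsupW : (M i ⊓ W) ⊔ (M k ⊓ W) = W := by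
      have hle1 : (M i ⊓ W) ⊔ (M k ⊓ W) ≤ W := sup_le inf_le_right inf_le_right
      have hne2 : (M i ⊓ W) ≠ (M i ⊓ W) ⊔ (M k ⊓ W) := by
        intro h
        apply hne
        have hle2 : M k ⊓ W ≤ M i ⊓ W := h ▸ le_sup_right
        exact (Subgroup.eq_of_le_of_card_ge hle2 (le_of_eq hcardik)).symm
      have h3 : p * Nat.card ↥(M i ⊓ W) ≤ Nat.card ↥((M i ⊓ W) ⊔ (M k ⊓ W)) :=
        aux_mul_card_le hp hcardG le_sup_left hne2
      refine Subgroup.eq_of_le_of_card_ge hle1 ?_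
      calc Nat.card W = p * Nat.card ↥(M i ⊓ W) := hpa.symm
      _ ≤ Nat.card ↥((M i ⊓ W) ⊔ (M k ⊓ W)) := h3
    have hab : a⁻¹ * b ∈ (M i ⊓ W) ⊔ (M k ⊓ W) := by
      rw [hsupW]
      have hga : g⁻¹ * a ∈ W := (hAmem a).1 (hBsubA i haB)
      have hgb : g⁻¹ * b ∈ W := (hAmem b).1 (hBsubA k hbB)
      have : (g⁻¹ * a)⁻¹ * (g⁻¹ * b) ∈ W := W.mul_mem (W.inv_mem hga) hgb
      rwa [mul_inv_rev, inv_inv, mul_assoc, mul_inv_cancel_left] at this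
    obtain ⟨y, hy, z, hz, hyz⟩ := Subgroup.mem_sup.1 hab
    have hx1 : a * y ∈ B i := by
      rw [hBa]
      exact ((coset a (M i ⊓ W)).2 _).2 (by rw [inv_mul_cancel_left]; exact hy)
    have hx2 : a * y ∈ B k := by
      rw [hBb]
      refine ((coset b (M k ⊓ W)).2 _).2 ?_
      have : b⁻¹ * (a * y) = z⁻¹ := by
        have h5 : a * (y * z) = b := by rw [hyz, mul_inv_cancel_left]
        rw [← h5, ← mul_assoc a y z, mul_inv_rev, inv_mul_cancel_right]
      rw [this]
      exact (M k ⊓ W).inv_mem hz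
    have hlt := aux_biUnion_lt hi hk hik hx1 hx2
    have hsum2 : ∑ l ∈ S, p * (B l).card = p * Nat.card W := by
      calc ∑ l ∈ S, p * (B l).card = ∑ _l ∈ S, Nat.card W := Finset.sum_congr rfl hBeq
      _ = S.card * Nat.card W := by rw [Finset.sum_const, smul_eq_mul]
      _ = p * Nat.card W := by rw [hScard]
    have hsum3 : ∑ l ∈ S, (B l).card = Nat.card W := by
      have : p * ∑ l ∈ S, (B l).card = p * Nat.card W := by
        rw [Finset.mul_sum]; exact hsum2
      exact Nat.eq_of_mul_eq_mul_left hp.pos this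
    have hle4 : Nat.card W ≤ (S.biUnion B).card := by
      rw [← hAcard]; exact Finset.card_le_card hcoverA
    omega
  -- conclude: M j ⊓ W is below every M l, hence trivial
  obtain ⟨a, haB, hBa, hpa⟩ := hBcoset j hjS
  have hU : M j ⊓ W = ⊥ := by
    apply hbot
    intro l
    by_cases hl : l ∈ T
    · exact le_trans inf_le_right (hWM l hl)
    · rw [hWieq j hjS l (Finset.mem_compl.2 hl)]
      exact inf_le_left
  rw [hU, Subgroup.card_bot, Nat.mul_one] at hpa
  omega
end

section
/- Let p be a prime number, let d ≥ 2 be an integer, and suppose G = (C_p)^d has a 𝔠_n-cover {M_1, …, M_n}. Then there exists a subset T of {1, …, n} with |T| = d such that the intersection ⋂_{i ∈ T} M_i is the trivial subgroup. -/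
theorem statement_16 (p : ℕ) (hp : p.Prime) (d : ℕ) (hd : 2 ≤ d) (n : ℕ)
    (M : Fin n → Subgroup (Fin d → Multiplicative (ZMod p)))
    (hM : IsCCoverFam n M) :
    ∃ T : Finset (Fin n), T.card = d ∧ (⨅ i ∈ T, M i) = ⊥ := by
  classical
  haveI : Fact p.Prime := ⟨hp⟩
  set G := Fin d → Multiplicative (ZMod p) with hG
  obtain ⟨hinj, hcard, hproper, hcover, hirr, hcoatom, hcore⟩ := hM
  have hcardG : Nat.card G = p ^ d := by
    simp [hG, Nat.card_pi, Nat.card_eq_fintype_card, ZMod.card]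
  -- every element has order dividing p
  have hexp : ∀ g : G, g ^ p = 1 := by
    intro g
    funext i
    show (g i) ^ p = 1
    rw [← ofAdd_toAdd (g i), ← ofAdd_nsmul]
    simp [nsmul_eq_mul, ZMod.natCast_self]
  -- membership of each M i in the cover
  have hmem : ∀ i : Fin n, M i ∈ (Finset.univ.image M : Finset (Subgroup G)) :=
    fun i => Finset.mem_image.mpr ⟨i, Finset.mem_univ i, rfl⟩
  -- each member has index p
  have hidx : ∀ i : Fin n, (M i).index = p := by
    intro i
    have hc : IsCoatom (M i) := hcoatom (M i) (hmem i)
    obtain ⟨g, hg⟩ : ∃ g : G, g ∉ M i := by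
      by_contra h
      push_neg at h
      exact hc.1 ((Subgroup.eq_top_iff' (M i)).mpr h)
    have htop : M i ⊔ Subgroup.zpowers g = ⊤ :=
      hc.2 _ (left_lt_sup.mpr (fun h => hg (Subgroup.zpowers_le.mp h)))
    set f : G →* G ⧸ (M i) := QuotientGroup.mk' (M i) with hf
    have hmap : Subgroup.zpowers (f g) = ⊤ := by
      have h1 : Subgroup.map f (M i ⊔ Subgroup.zpowers g) = ⊤ := by
        rw [htop]
        exact Subgroup.map_top_of_surjective f (QuotientGroup.mk'_surjective _)
      rw [Subgroup.map_sup, f.map_zpowers,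
        (Subgroup.map_eq_bot_iff (M i)).mpr (le_of_eq (QuotientGroup.ker_mk' (M i)).symm),
        bot_sup_eq] at h1
      exact h1
    have hdvd : (M i).index ∣ p := by
      rw [Subgroup.index_eq_card, ← Subgroup.card_top, ← hmap, Nat.card_zpowers]
      exact orderOf_dvd_of_pow_eq_one (by rw [← map_pow, hexp g, map_one])
    have hne : (M i).index ≠ 1 := fun h => hc.1 (Subgroup.index_eq_one.mp h)
    exact (hp.eq_one_or_self_of_dvd _ hdvd).resolve_left hne
  -- the intersection of all members is trivial (core-free + abelian)
  have hbot : ∀ K : Subgroup G, (∀ i : Fin n, K ≤ M i) → K = ⊥ := by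
    intro K hK
    have h1 : ((Finset.univ.image M : Finset (Subgroup G)).inf id) = ⊥ := by
      rw [← Subgroup.normalCore_eq_self ((Finset.univ.image M : Finset (Subgroup G)).inf id)]
      exact hcore
    have h2 : K ≤ (Finset.univ.image M : Finset (Subgroup G)).inf id := by
      refine Finset.le_inf fun N hN => ?_
      obtain ⟨i, _, rfl⟩ := Finset.mem_image.mp hN
      exact hK i
    exact le_bot_iff.mp (h1 ▸ h2)
  -- main greedy induction
  have main : ∀ k, k ≤ d → ∃ T : Finset (Fin n), T.card = k ∧ (⨅ i ∈ T, M i).index = p ^ k := by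
    intro k
    induction k with
    | zero => exact fun _ => ⟨∅, rfl, by simp⟩
    | succ k ih =>
      intro hk
      obtain ⟨T, hTcard, hTidx⟩ := ih (Nat.le_of_succ_le hk)
      set K : Subgroup G := ⨅ i ∈ T, M i with hKdef
      have hKne : K ≠ ⊥ := by
        intro h
        rw [h, Subgroup.index_bot, hcardG] at hTidx
        have : d = k := Nat.pow_right_injective hp.two_le hTidx
        omega
      obtain ⟨i, hi⟩ : ∃ i : Fin n, ¬ K ≤ M i := by
        by_contra h
        push_neg at h
        exact hKne (hbot K h)
      have hiT : i ∉ T := fun h =>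
        hi (iInf_le_of_le i (iInf_le (fun _ => M i) h))
      refine ⟨insert i T, by rw [Finset.card_insert_of_notMem hiT, hTcard], ?_⟩
      have hins : (⨅ j ∈ (insert i T : Finset (Fin n)), M j) = M i ⊓ K := by
        rw [hKdef, Finset.iInf_insert]
      rw [hins]
      have h1 : (M i).relIndex K ∣ p := by
        have h0 := Subgroup.relIndex_dvd_index_of_normal (M i) K
        rwa [hidx i] at h0
      have h2 : (M i).relIndex K ≠ 1 := fun h => hi (Subgroup.relIndex_eq_one.mp h)
      have h3 : (M i).relIndex K = p := (hp.eq_one_or_self_of_dvd _ h1).resolve_left h2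
      have h4 : (M i ⊓ K).relIndex K * K.index = (M i ⊓ K).index :=
        Subgroup.relIndex_mul_index inf_le_right
      rw [Subgroup.inf_relIndex_right, h3, hTidx] at h4
      rw [← h4, pow_succ, mul_comm]
  obtain ⟨T, hTcard, hTidx⟩ := main d le_rfl
  refine ⟨T, hTcard, ?_⟩
  have hcm := Subgroup.card_mul_index (⨅ i ∈ T, M i)
  rw [hTidx, hcardG] at hcm
  have hpos : 0 < p ^ d := pow_pos hp.pos d
  have h1 : Nat.card (⨅ i ∈ T, M i : Subgroup G) = 1 :=
    Nat.eq_of_mul_eq_mul_right hpos (by rw [hcm, one_mul])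
  exact Subgroup.card_eq_one.mp h1
end

section
/- Let p be a prime number, let d ≥ 2 be an integer, and suppose G = (C_p)^d has a 𝔠_n-cover {M_1, …, M_n}. If ⋂_{i ∈ S} M_i is the trivial subgroup for every subset S of {1, …, n} with |S| = d, then for every subset T of {1, …, n} with |T| = d − 1 one has p ≤ |⋂_{i ∈ T} M_i| ≤ n − d + 1. -/
lemma aux_index_coatom {G : Type*} [CommGroup G] [Finite G] {p d : ℕ} (hp : p.Prime)
    (hG : Nat.card G = p ^ d) {H : Subgroup G} (hH : IsCoatom H) : H.index = p := by
  have h1 : H.index ≠ 1 := fun h => hH.1 (Subgroup.index_eq_one.mp h)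
  have h0 : H.index ≠ 0 := Subgroup.index_ne_zero_of_finite
  haveI : Nontrivial (G ⧸ H) := by
    refine Finite.one_lt_card_iff_nontrivial.mp ?_
    rw [← Subgroup.index_eq_card]
    omega
  haveI : IsSimpleGroup (G ⧸ H) := by
    constructor
    intro H' _
    have hsur := QuotientGroup.mk'_surjective H
    have hle : H ≤ H'.comap (QuotientGroup.mk' H) := by
      intro g hg
      have : (QuotientGroup.mk' H) g = 1 := (QuotientGroup.eq_one_iff g).mpr hg
      simpa [Subgroup.mem_comap, this] using H'.one_mem
    rcases hle.lt_or_eq with hlt | heq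
    · right
      rw [← Subgroup.map_comap_eq_self_of_surjective hsur H', hH.2 _ hlt]
      exact Subgroup.map_top_of_surjective _ hsur
    · left
      rw [← Subgroup.map_comap_eq_self_of_surjective hsur H', ← heq,
        Subgroup.map_eq_bot_iff, QuotientGroup.ker_mk']
  have hq : (H.index).Prime := by
    rw [Subgroup.index_eq_card]
    exact IsSimpleGroup.prime_card
  have hdvd : H.index ∣ p ^ d := hG ▸ Subgroup.index_dvd_card H
  exact (Nat.prime_dvd_prime_iff_eq hq hp).mp (hq.dvd_of_dvd_pow hdvd)

theorem statement_17 (p : ℕ) (hp : p.Prime) (d : ℕ) (hd : 2 ≤ d) (n : ℕ)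
    (M : Fin n → Subgroup (Fin d → Multiplicative (ZMod p)))
    (hM : IsCCoverFam n M)
    (hbot : ∀ S : Finset (Fin n), S.card = d → (⨅ i ∈ S, M i) = ⊥)
    (T : Finset (Fin n)) (hT : T.card = d - 1) :
    p ≤ Nat.card ↥(⨅ i ∈ T, M i) ∧ Nat.card ↥(⨅ i ∈ T, M i) ≤ n - d + 1 := by
  classical
  haveI : Fact p.Prime := ⟨hp⟩
  haveI : NeZero p := ⟨hp.ne_zero⟩
  set G := (Fin d → Multiplicative (ZMod p)) with hG
  obtain ⟨hinj, hcard, hprop, hcov, hirr, hcoat, hcore⟩ := hM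
  have hcardG : Nat.card G = p ^ d := by
    rw [hG, Nat.card_pi]
    simp [Nat.card_congr Multiplicative.toAdd, Nat.card_zmod]
  set K : Subgroup G := ⨅ i ∈ T, M i with hK
  -- every M i is a coatom
  have hcoat' : ∀ i : Fin n, IsCoatom (M i) := fun i =>
    hcoat (M i) (Finset.mem_image_of_mem M (Finset.mem_univ i))
  have hidx : ∀ i : Fin n, (M i).index = p := fun i =>
    aux_index_coatom hp hcardG (hcoat' i)
  -- lower bound
  have hKidx : K.index ≤ p ^ (d - 1) := by
    have he : K = ⨅ i : T, M (i : Fin n) := by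
      rw [hK, iInf_subtype]
    calc K.index ≤ ∏ i : T, (M (i : Fin n)).index := he ▸ Subgroup.index_iInf_le _
      _ = p ^ (d - 1) := by
          simp only [hidx, Finset.prod_const, Finset.card_univ, Fintype.card_coe, hT]
  have hlow : p ≤ Nat.card ↥K := by
    have hmul : Nat.card ↥K * K.index = p ^ d := by
      rw [Subgroup.card_mul_index, hcardG]
    have hle : p * p ^ (d - 1) ≤ Nat.card ↥K * p ^ (d - 1) := by
      calc p * p ^ (d - 1) = p ^ d := by
            rw [← pow_succ']; congr 1; omega
        _ = Nat.card ↥K * K.index := hmul.symm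
        _ ≤ Nat.card ↥K * p ^ (d - 1) := Nat.mul_le_mul_left _ hKidx
    exact Nat.le_of_mul_le_mul_right hle (pow_pos hp.pos _)
  refine ⟨hlow, ?_⟩
  -- d ≤ n
  have hTn : T.card ≤ n := by simpa using Finset.card_le_univ T
  have hdn : d ≤ n := by
    by_contra hcon
    have hTuniv : T = Finset.univ := Finset.eq_univ_of_card T (by simp; omega)
    have hKbot : K = ⊥ := by
      have hinf : (Finset.univ.image M).inf id = K := by
        rw [Finset.inf_image, hK, hTuniv]
        simp [Finset.inf_eq_iInf]
      have hnormal : K ≤ K.normalCore := Subgroup.normal_le_normalCore.mpr le_rfl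
      rw [hinf] at hcore
      exact le_bot_iff.mp (hcore ▸ hnormal)
    rw [hKbot] at hlow
    simp at hlow
    have := hp.two_le
    omega
  -- upper bound: pick x avoiding all M i, i ∈ T
  have hss : T.image M ⊂ Finset.univ.image M := by
    refine lt_of_le_of_ne (Finset.image_subset_image (Finset.subset_univ T)) ?_
    intro h
    have h1 : (T.image M).card = d - 1 := by rw [Finset.card_image_of_injective _ hinj, hT]
    have h2 : (Finset.univ.image M).card = n := by
      rw [Finset.card_image_of_injective _ hinj, Finset.card_univ, Fintype.card_fin]
    rw [h] at h1
    omega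
  obtain ⟨x, hx⟩ := hirr _ hss
  have hxT : ∀ i ∈ T, x ∉ M i := fun i hi => hx _ (Finset.mem_image_of_mem M hi)
  -- K ≤ M i for i ∈ T
  have hKle : ∀ i ∈ T, K ≤ M i := fun i hi => by
    rw [hK]; exact iInf₂_le i hi
  -- choose for each k an index outside T
  have hchoice : ∀ k : ↥K, ∃ j : Fin n, j ∉ T ∧ x * (k : G) ∈ M j := by
    intro k
    obtain ⟨N, hN, hxk⟩ := hcov (x * (k : G))
    obtain ⟨j, -, rfl⟩ := Finset.mem_image.mp hN
    refine ⟨j, fun hj => ?_, hxk⟩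
    exact hxT j hj (by simpa using (M j).mul_mem hxk ((M j).inv_mem (hKle j hj k.2)))
  choose jf hjT hjM using hchoice
  have hjinj : Function.Injective jf := by
    intro k k' hkk'
    have hSbot : (⨅ i ∈ insert (jf k) T, M i) = ⊥ := by
      refine hbot _ ?_
      rw [Finset.card_insert_of_notMem (hjT k), hT]
      omega
    rw [Finset.iInf_insert] at hSbot
    have hmem : ((k : G)⁻¹ * (k' : G)) ∈ M (jf k) ⊓ K := by
      constructor
      · have h2 := hjM k'
        rw [← hkk'] at h2
        simpa [mul_assoc] using (M (jf k)).mul_mem ((M (jf k)).inv_mem (hjM k)) h2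
      · exact K.mul_mem (K.inv_mem k.2) k'.2
    rw [← hK] at hSbot
    rw [hSbot, Subgroup.mem_bot, inv_mul_eq_one] at hmem
    exact Subtype.ext (by exact_mod_cast hmem)
  -- card bound
  have hmap : ∀ k : ↥K, jf k ∈ Tᶜ := fun k => Finset.mem_compl.mpr (hjT k)
  have hinj2 : Function.Injective (fun k : ↥K => (⟨jf k, hmap k⟩ : {j // j ∈ Tᶜ})) :=
    fun k k' h => hjinj (congrArg Subtype.val h)
  have hcardle : Nat.card ↥K ≤ Nat.card {j // j ∈ Tᶜ} :=
    Nat.card_le_card_of_injective _ hinj2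
  have hcc : Nat.card {j // j ∈ Tᶜ} = n - (d - 1) := by
    rw [Nat.card_eq_fintype_card, Fintype.card_coe, Finset.card_compl, hT, Fintype.card_fin]
  exact (hcc ▸ hcardle).trans (by omega)
end
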